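/- arXiv:1205.2036 — 11 statements merged into one kernel-verified Lean document; each statement's English description precedes it below -/
import Mathlib

section
/- Let g be a weak hyperation of a normal function f. Then: (1) if ξ < ζ then g ξ α ≤ g ζ α for every ordinal α; (2) if ξ + ζ = ζ then g ξ ∘ g ζ = g ζ (so every value of g ζ is a fixed point of g ξ); (3) if η < ω^ρ then g η (g (ω^ρ) ξ + 1) ≤ g (ω^ρ) (ξ + 1) for every ordinal ξ. -/
open Ordinal

/-- An ordinal function is *initial* if it maps every initial segment onto an initial segment. -/
def Initial (g : Ordinal → Ordinal) : Prop :=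
  ∀ β : Ordinal, ∃ γ : Ordinal, g '' {α | α < β} = {α | α < γ}

/-- A *weak hyperation* of a normal function `f`. -/
def WeakHyperation (f : Ordinal → Ordinal) (g : Ordinal → Ordinal → Ordinal) : Prop :=
  (∀ ξ : Ordinal, Order.IsNormal (g ξ)) ∧ g 0 = id ∧ g 1 = f ∧
    ∀ ξ ζ : Ordinal, g (ξ + ζ) = g ξ ∘ g ζ

/-- `F` is *the hyperation* of `f`: the pointwise minimal weak hyperation. -/
def IsHyperation (f : Ordinal → Ordinal) (F : Ordinal → Ordinal → Ordinal) : Prop :=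
  WeakHyperation f F ∧
    ∀ h : Ordinal → Ordinal → Ordinal, WeakHyperation f h → ∀ ξ ζ : Ordinal, F ξ ζ ≤ h ξ ζ

/-- A *weak cohyperation* of an initial function `f`. -/
def WeakCohyperation (f : Ordinal → Ordinal) (g : Ordinal → Ordinal → Ordinal) : Prop :=
  (∀ ξ : Ordinal, Initial (g ξ)) ∧ g 0 = id ∧ g 1 = f ∧
    ∀ ξ ζ : Ordinal, g (ξ + ζ) = g ζ ∘ g ξ

/-- `G` is *the cohyperation* of `f`: the pointwise maximal weak cohyperation. -/
def IsCohyperation (f : Ordinal → Ordinal) (G : Ordinal → Ordinal → Ordinal) : Prop :=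
  WeakCohyperation f G ∧
    ∀ h : Ordinal → Ordinal → Ordinal, WeakCohyperation f h → ∀ ξ α : Ordinal, h ξ α ≤ G ξ α

/-- `g` is a *left adjoint* of `f`. -/
def LeftAdjoint (f g : Ordinal → Ordinal) : Prop :=
  ∀ α β : Ordinal, (α = f β → g α = β) ∧ (α < f β → g α < β)

theorem weakHyperation_properties (f : Ordinal → Ordinal) (hf : Order.IsNormal f)
    (g : Ordinal → Ordinal → Ordinal) (hg : WeakHyperation f g) :
    (∀ ξ ζ α : Ordinal, ξ < ζ → g ξ α ≤ g ζ α) ∧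
    (∀ ξ ζ : Ordinal, ξ + ζ = ζ → g ξ ∘ g ζ = g ζ) ∧
    (∀ η ρ ξ : Ordinal, η < Ordinal.omega0 ^ ρ →
      g η (g (Ordinal.omega0 ^ ρ) ξ + 1) ≤ g (Ordinal.omega0 ^ ρ) (ξ + 1)) := by
  obtain ⟨hnorm, h0, h1, hadd⟩ := hg
  refine ⟨fun ξ ζ α hlt => ?_, fun ξ ζ h => ?_, fun η ρ ξ hlt => ?_⟩
  · have hζ : ξ + (ζ - ξ) = ζ := Ordinal.add_sub_cancel_of_le hlt.le
    rw [← hζ, hadd]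
    exact (hnorm ξ).strictMono.monotone (hnorm (ζ - ξ)).strictMono.le_apply
  · rw [← hadd, h]
  · have key : g η ∘ g (Ordinal.omega0 ^ ρ) = g (Ordinal.omega0 ^ ρ) := by
      rw [← hadd, Ordinal.add_omega0_opow hlt]
    have h1 : g (Ordinal.omega0 ^ ρ) ξ + 1 ≤ g (Ordinal.omega0 ^ ρ) (ξ + 1) :=
      Order.add_one_le_of_lt ((hnorm _).strictMono (lt_add_one ξ))
    calc g η (g (Ordinal.omega0 ^ ρ) ξ + 1)
        ≤ g η (g (Ordinal.omega0 ^ ρ) (ξ + 1)) := (hnorm η).strictMono.monotone h1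
      _ = g (Ordinal.omega0 ^ ρ) (ξ + 1) := congrFun key (ξ + 1)
end

section
/- Let f be a normal function and let g : Ordinal → Ordinal → Ordinal be a family of normal functions satisfying: (a) g 0 is the identity; (b) g 1 = f; (c) g (ω^ρ + ξ) = g (ω^ρ) ∘ g ξ whenever ξ < ω^ρ + ξ; (d) g (ω^δ) ∘ g (ω^ρ) = g (ω^ρ) whenever ω^δ < ω^ρ. Then g is a weak hyperation of f, i.e., g (ξ + ζ) = g ξ ∘ g ζ holds for all ordinals ξ, ζ. -/
open Ordinal

lemma aux_absorp {ρ η : Ordinal} (h : omega0 ^ ρ + η = η) : omega0 ^ (ρ + 1) ≤ η := by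
  rw [← Order.succ_eq_add_one, opow_succ, mul_le_iff_of_isSuccLimit isSuccLimit_omega0]
  intro b hb
  obtain ⟨n, rfl⟩ := lt_omega0.1 hb
  induction n with
  | zero => simp
  | succ n ih =>
    have e : ((n + 1 : ℕ) : Ordinal) = 1 + (n : Ordinal) := by
      rw [Ordinal.one_add_natCast, Order.succ_eq_add_one]
    rw [e, mul_add, mul_one]
    calc omega0 ^ ρ + omega0 ^ ρ * (n : Ordinal) ≤ omega0 ^ ρ + η :=
          add_le_add_right (ih (nat_lt_omega0 n)) _
      _ = η := h

lemma aux_decomp {ξ : Ordinal} (hξ : ξ ≠ 0) :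
    omega0 ^ log omega0 ξ + (ξ - omega0 ^ log omega0 ξ) = ξ ∧ ξ - omega0 ^ log omega0 ξ < ξ := by
  have hle : omega0 ^ log omega0 ξ ≤ ξ := opow_log_le_self _ hξ
  have hxi := Ordinal.add_sub_cancel_of_le hle
  refine ⟨hxi, ?_⟩
  rcases lt_or_eq_of_le (sub_le_self ξ (omega0 ^ log omega0 ξ)) with h | h
  · exact h
  · exfalso
    rw [h] at hxi
    have := aux_absorp hxi
    have h2 := lt_opow_succ_log_self one_lt_omega0 ξ
    rw [Order.succ_eq_add_one] at h2
    exact absurd this h2.not_ge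

theorem weakHyperation_of_special_cases (f : Ordinal → Ordinal) (hf : Order.IsNormal f)
    (g : Ordinal → Ordinal → Ordinal)
    (hnorm : ∀ ξ : Ordinal, Order.IsNormal (g ξ))
    (h0 : g 0 = id) (h1 : g 1 = f)
    (hc : ∀ ρ ξ : Ordinal, ξ < Ordinal.omega0 ^ ρ + ξ →
      g (Ordinal.omega0 ^ ρ + ξ) = g (Ordinal.omega0 ^ ρ) ∘ g ξ)
    (hd : ∀ δ ρ : Ordinal, Ordinal.omega0 ^ δ < Ordinal.omega0 ^ ρ →
      g (Ordinal.omega0 ^ δ) ∘ g (Ordinal.omega0 ^ ρ) = g (Ordinal.omega0 ^ ρ)) :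
    WeakHyperation f g := by
  refine ⟨hnorm, h0, h1, ?_⟩
  intro ξ
  induction ξ using Ordinal.induction with
  | h ξ IH =>
    intro ζ
    rcases eq_or_ne ξ 0 with rfl | hξ
    · simp [h0]
    · set ρ := log omega0 ξ with hρ
      obtain ⟨hxi, hlt⟩ := aux_decomp hξ
      set ξ' := ξ - omega0 ^ ρ with hξ'def
      -- ξ = ω^ρ + ξ'
      have hlt' : ξ' < omega0 ^ ρ + ξ' := by rw [hxi]; exact hlt
      rcases lt_or_eq_of_le (le_add_self : ξ' + ζ ≤ omega0 ^ ρ + (ξ' + ζ)) with hcase | hcase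
      · -- non-absorbing case
        rw [← hxi, add_assoc, hc ρ (ξ' + ζ) hcase, IH ξ' hlt ζ, hc ρ ξ' hlt',
          Function.comp_assoc]
      · -- absorbing case: ω^ρ + (ξ' + ζ) = ξ' + ζ
        set η := ξ' + ζ with hηdef
        have habs : omega0 ^ ρ + η = η := hcase.symm
        have hη0 : η ≠ 0 := by
          rintro h
          rw [h, add_zero] at habs
          exact (opow_ne_zero ρ omega0_ne_zero) habs
        have hσ : ρ + 1 ≤ log omega0 η :=
          (opow_le_iff_le_log one_lt_omega0 hη0).1 (aux_absorp habs)
        set σ := log omega0 η with hσdef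
        obtain ⟨hedec, helt⟩ := aux_decomp hη0
        set η' := η - omega0 ^ σ with hη'def
        have helt' : η' < omega0 ^ σ + η' := by rw [hedec]; exact helt
        have hpow : omega0 ^ ρ < omega0 ^ σ :=
          (opow_lt_opow_iff_right one_lt_omega0).2 (lt_of_lt_of_le (lt_add_one ρ) hσ)
        calc g (ξ + ζ) = g η := by rw [← hxi, add_assoc, ← hηdef, habs]
          _ = g (omega0 ^ σ) ∘ g η' := by rw [← hedec]; exact hc σ η' helt'
          _ = (g (omega0 ^ ρ) ∘ g (omega0 ^ σ)) ∘ g η' := by rw [hd ρ σ hpow]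
          _ = g (omega0 ^ ρ) ∘ g (omega0 ^ σ + η') := by
              rw [hc σ η' helt', Function.comp_assoc]
          _ = g (omega0 ^ ρ) ∘ g (ξ' + ζ) := by rw [hedec]
          _ = g (omega0 ^ ρ) ∘ (g ξ' ∘ g ζ) := by rw [IH ξ' hlt ζ]
          _ = (g (omega0 ^ ρ) ∘ g ξ') ∘ g ζ := by rw [Function.comp_assoc]
          _ = g ξ ∘ g ζ := by rw [← hc ρ ξ' hlt', hxi]
end

section
/- Let f be a normal function and F its hyperation. Then F satisfies the following recursion at additively indecomposable indices: for every ordinal ρ > 0, (i) F (ω^ρ) 0 = sup_{ζ<ω^ρ} F ζ 0; (ii) F (ω^ρ) (ξ + 1) = sup_{ζ<ω^ρ} F ζ (F (ω^ρ) ξ + 1) for every ordinal ξ; and (iii) F (ω^ρ) λ = sup_{ξ<λ} F (ω^ρ) ξ for every limit ordinal λ. -/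
open Ordinal

open Set Order

namespace HypRecAux

universe u v

/-- Subtracting the leading Cantor term decreases an ordinal. -/
theorem sub_log_lt {ζ : Ordinal.{v}} (hζ : ζ ≠ 0) : ζ - omega0 ^ log omega0 ζ < ζ := by
  set l := log omega0 ζ
  by_contra hcon
  push_neg at hcon
  have heq : ζ - omega0 ^ l = ζ := le_antisymm (Ordinal.sub_le_self _ _) hcon
  have habs : omega0 ^ l + ζ = ζ := by
    conv_lhs => rw [← heq]
    rw [Ordinal.add_sub_cancel_of_le (opow_log_le_self omega0 hζ)]
  have hn : ∀ n : ℕ, omega0 ^ l * n + ζ = ζ := by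
    intro n
    induction n with
    | zero => simp
    | succ n ih =>
      push_cast
      rw [mul_add, mul_one, add_assoc, habs, ih]
  have : omega0 ^ (l + 1) ≤ ζ := by
    rw [opow_add, opow_one]
    rw [mul_le_iff_of_isSuccLimit isSuccLimit_omega0]
    intro b hb
    obtain ⟨n, rfl⟩ := lt_omega0.1 hb
    calc omega0 ^ l * n ≤ omega0 ^ l * n + ζ := le_self_add
      _ = ζ := hn n
  exact this.not_gt (by simpa using lt_opow_succ_log_self one_lt_omega0 ζ)

/-- CNF-style recursion skeleton: peel the leading `ω`-power. -/
noncomputable def Eb (Q : Ordinal.{v} → Ordinal.{u} → Ordinal.{u}) (ζ : Ordinal.{v}) :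
    Ordinal.{u} → Ordinal.{u} :=
  if h : ζ = 0 then id
  else Q (log omega0 ζ) ∘ Eb Q (ζ - omega0 ^ log omega0 ζ)
termination_by ζ
decreasing_by exact sub_log_lt h

theorem Eb_zero (Q : Ordinal.{v} → Ordinal.{u} → Ordinal.{u}) : Eb Q 0 = id := by
  rw [Eb]; simp

theorem Eb_pos (Q : Ordinal.{v} → Ordinal.{u} → Ordinal.{u}) {ζ : Ordinal.{v}} (hζ : ζ ≠ 0) :
    Eb Q ζ = Q (log omega0 ζ) ∘ Eb Q (ζ - omega0 ^ log omega0 ζ) := by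
  rw [Eb]; simp [hζ]

/-- The transfinite recursion defining the hyperation at an indecomposable `ω ^ ρ`. -/
noncomputable def Gd (E' : Ordinal.{v} → Ordinal.{u} → Ordinal.{u}) (ρ : Ordinal.{v})
    (α : Ordinal.{u}) : Ordinal.{u} :=
  limitRecOn α (⨆ ζ : Iio (omega0 ^ ρ), E' ζ.1 0)
    (fun _ ih => ⨆ ζ : Iio (omega0 ^ ρ), E' ζ.1 (ih + 1))
    (fun l _ ih => ⨆ β : Iio l, ih β.1 β.2)

theorem Gd_zero (E' : Ordinal.{v} → Ordinal.{u} → Ordinal.{u}) (ρ : Ordinal.{v}) :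
    Gd E' ρ 0 = ⨆ ζ : Iio (omega0 ^ ρ), E' ζ.1 0 :=
  limitRecOn_zero _ _ _

theorem Gd_succ (E' : Ordinal.{v} → Ordinal.{u} → Ordinal.{u}) (ρ : Ordinal.{v})
    (α : Ordinal.{u}) :
    Gd E' ρ (α + 1) = ⨆ ζ : Iio (omega0 ^ ρ), E' ζ.1 (Gd E' ρ α + 1) := by
  rw [add_one_eq_succ, Gd, limitRecOn_succ]; rfl

theorem Gd_limit (E' : Ordinal.{v} → Ordinal.{u} → Ordinal.{u}) (ρ : Ordinal.{v})
    {l : Ordinal.{u}} (hl : IsSuccLimit l) : Gd E' ρ l = ⨆ β : Iio l, Gd E' ρ β.1 := by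
  rw [Gd, limitRecOn_limit _ _ _ _ hl]; rfl

/-- The hyperation at indecomposables, by recursion on the exponent. -/
noncomputable def Pd (f : Ordinal.{u} → Ordinal.{u}) (ρ : Ordinal.{v}) :
    Ordinal.{u} → Ordinal.{u} :=
  if ρ = 0 then f
  else Gd (fun ζ => Eb (fun σ => if hσ : σ < ρ then Pd f σ else id) ζ) ρ
termination_by ρ
decreasing_by exact hσ

theorem Pd_zero (f : Ordinal.{u} → Ordinal.{u}) : Pd.{u, v} f 0 = f := by rw [Pd]; simp

/-- The hyperation. -/
noncomputable def Ed (f : Ordinal.{u} → Ordinal.{u}) :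
    Ordinal.{v} → Ordinal.{u} → Ordinal.{u} := Eb (Pd f)

theorem Eb_congr {Q Q' : Ordinal.{v} → Ordinal.{u} → Ordinal.{u}} {ρ : Ordinal.{v}}
    (hQ : ∀ σ < ρ, Q σ = Q' σ) : ∀ ζ < omega0 ^ ρ, Eb Q ζ = Eb Q' ζ := by
  intro ζ
  induction ζ using Ordinal.induction with
  | _ ζ IH =>
    intro hζ
    rcases eq_or_ne ζ 0 with rfl | hζ0
    · rw [Eb_zero, Eb_zero]
    · rw [Eb_pos Q hζ0, Eb_pos Q' hζ0,
        hQ _ ((lt_opow_iff_log_lt one_lt_omega0 hζ0).1 hζ),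
        IH _ (sub_log_lt hζ0) ((Ordinal.sub_le_self _ _).trans_lt hζ)]

theorem Gd_congr {E' E'' : Ordinal.{v} → Ordinal.{u} → Ordinal.{u}} {ρ : Ordinal.{v}}
    (h : ∀ ζ < omega0 ^ ρ, E' ζ = E'' ζ) (α : Ordinal.{u}) : Gd E' ρ α = Gd E'' ρ α := by
  induction α using limitRecOn with
  | zero =>
    rw [Gd_zero, Gd_zero]
    exact iSup_congr fun ζ => by rw [h ζ.1 ζ.2]
  | add_one α ih =>
    rw [Gd_succ, Gd_succ, ih]
    exact iSup_congr fun ζ => by rw [h ζ.1 ζ.2]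
  | limit l hl ih =>
    rw [Gd_limit _ _ hl, Gd_limit _ _ hl]
    exact iSup_congr fun β => ih β.1 β.2

set_option maxHeartbeats 1000000 in
theorem Pd_pos (f : Ordinal.{u} → Ordinal.{u}) {ρ : Ordinal.{v}} (hρ : ρ ≠ 0) :
    Pd f ρ = Gd (Ed f) ρ := by
  rw [Pd, if_neg hρ]
  funext α
  exact Gd_congr (fun ζ hζ =>
    Eb_congr (Q' := Pd f) (ρ := ρ) (fun σ hσ => dif_pos hσ) ζ hζ) α

theorem Ed_opow (f : Ordinal.{u} → Ordinal.{u}) (ρ : Ordinal.{v}) :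
    Ed f (omega0 ^ ρ) = Pd f ρ := by
  rw [Ed, Eb_pos _ (opow_ne_zero ρ omega0_ne_zero), log_opow one_lt_omega0, sub_self,
    Eb_zero, Function.comp_id]

section WithF

variable {f : Ordinal.{u} → Ordinal.{u}} {F : Ordinal.{v} → Ordinal.{u} → Ordinal.{u}}

theorem wh_absorb (hh : WeakHyperation f F) {ρ ζ : Ordinal.{v}} (hζ : ζ < omega0 ^ ρ)
    {x y : Ordinal.{u}} (hxy : y ≤ F (omega0 ^ ρ) x) : F ζ y ≤ F (omega0 ^ ρ) x := by
  have habs : ζ + omega0 ^ ρ = omega0 ^ ρ := add_absorp hζ le_rfl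
  calc F ζ y ≤ F ζ (F (omega0 ^ ρ) x) := (hh.1 ζ).monotone hxy
    _ = (F ζ ∘ F (omega0 ^ ρ)) x := rfl
    _ = F (ζ + omega0 ^ ρ) x := by rw [hh.2.2.2]
    _ = F (omega0 ^ ρ) x := by rw [habs]

theorem core (hf : Order.IsNormal f) (hh : WeakHyperation f F) :
    ∀ ξ : Ordinal.{v}, Order.IsNormal (Ed f ξ) ∧ ∀ x, Ed f ξ x ≤ F ξ x := by
  intro ξ
  induction ξ using Ordinal.induction with
  | _ ξ IH =>
  have hsucc : ∀ (ρ : Ordinal.{v}) (α : Ordinal.{u}),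
      F (omega0 ^ ρ) α + 1 ≤ F (omega0 ^ ρ) (α + 1) := by
    intro ρ α
    have hα : α < α + 1 := by rw [add_one_eq_succ]; exact lt_succ α
    have := (hh.1 (omega0 ^ ρ)).strictMono hα
    rw [add_one_eq_succ]
    exact succ_le_of_lt this
  have sub : ∀ ρ : Ordinal.{v},
      (∀ ζ < omega0 ^ ρ, Order.IsNormal (Ed f ζ) ∧ ∀ x, Ed f ζ x ≤ F ζ x) →
      Order.IsNormal (Pd f ρ) ∧ ∀ α, Pd f ρ α ≤ F (omega0 ^ ρ) α := by
    intro ρ hζs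
    rcases eq_or_ne ρ 0 with rfl | hρ
    · rw [Pd_zero, opow_zero, hh.2.2.1]
      exact ⟨hf, fun α => le_rfl⟩
    rw [Pd_pos f hρ]
    have hne : Nonempty (Iio (omega0 ^ ρ)) := ⟨⟨0, opow_pos ρ omega0_pos⟩⟩
    have B : ∀ α, Gd (Ed f) ρ α ≤ F (omega0 ^ ρ) α := by
      intro α
      induction α using limitRecOn with
      | zero =>
        rw [Gd_zero]
        refine ciSup_le ?_
        rintro ⟨ζ, hζ⟩
        exact ((hζs ζ hζ).2 0).trans (wh_absorb hh hζ zero_le)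
      | add_one α ih =>
        rw [Gd_succ]
        refine ciSup_le ?_
        rintro ⟨ζ, hζ⟩
        exact ((hζs ζ hζ).2 _).trans
          (wh_absorb hh hζ ((add_le_add_left ih 1).trans (hsucc ρ α)))
      | limit l hl ih =>
        rw [Gd_limit _ _ hl]
        have : Nonempty (Iio l) := ⟨⟨0, hl.pos⟩⟩
        refine ciSup_le ?_
        rintro ⟨β, hβ⟩
        exact (ih β hβ).trans ((hh.1 _).monotone hβ.le)
    have bdd : ∀ x y : Ordinal.{u}, x ≤ F (omega0 ^ ρ) y →
        BddAbove (Set.range fun ζ : Iio (omega0 ^ ρ) => Ed f ζ.1 x) := by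
      intro x y hxy
      refine ⟨F (omega0 ^ ρ) y, ?_⟩
      rintro w ⟨⟨ζ, hζ⟩, rfl⟩
      exact ((hζs ζ hζ).2 x).trans (wh_absorb hh hζ hxy)
    have hGd : Order.IsNormal (Gd (Ed f) ρ) := by
      refine Order.IsNormal.of_succ_lt ?_ ?_
      · intro o
        rw [← add_one_eq_succ, Gd_succ]
        have hb := bdd (Gd (Ed f) ρ o + 1) (o + 1)
          ((add_le_add_left (B o) 1).trans (hsucc ρ o))
        calc Gd (Ed f) ρ o < Gd (Ed f) ρ o + 1 := lt_add_one _
          _ = Ed f 0 (Gd (Ed f) ρ o + 1) := by rw [Ed, Eb_zero]; rfl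
          _ ≤ ⨆ ζ : Iio (omega0 ^ ρ), Ed f ζ.1 (Gd (Ed f) ρ o + 1) :=
            le_ciSup hb ⟨0, opow_pos ρ omega0_pos⟩
      · intro o ho
        rw [Gd_limit _ _ ho]
        have hno : Nonempty (Iio o) := ⟨⟨0, ho.pos⟩⟩
        have hbl : BddAbove (Set.range fun β : Iio o => Gd (Ed f) ρ β.1) := by
          refine ⟨F (omega0 ^ ρ) o, ?_⟩
          rintro w ⟨⟨β, hβ⟩, rfl⟩
          exact (B β).trans ((hh.1 _).monotone hβ.le)
        rw [Set.image_eq_range]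
        exact isLUB_ciSup hbl
    exact ⟨hGd, B⟩
  rcases eq_or_ne ξ 0 with rfl | hξ
  · rw [Ed, Eb_zero]
    refine ⟨Order.IsNormal.id, fun x => ?_⟩
    rw [hh.2.1]
  · have hτle : omega0 ^ log omega0 ξ ≤ ξ := opow_log_le_self omega0 hξ
    have hsub2 : omega0 ^ log omega0 ξ + (ξ - omega0 ^ log omega0 ξ) = ξ :=
      Ordinal.add_sub_cancel_of_le hτle
    have hP := sub (log omega0 ξ) (fun ζ hζ => IH ζ (hζ.trans_le hτle))
    have htail := IH _ (sub_log_lt hξ)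
    constructor
    · rw [Ed, Eb_pos _ hξ]
      exact hP.1.comp htail.1
    · intro x
      rw [Ed, Eb_pos _ hξ]
      calc Pd f (log omega0 ξ) (Eb (Pd f) (ξ - omega0 ^ log omega0 ξ) x)
          ≤ Pd f (log omega0 ξ) (F (ξ - omega0 ^ log omega0 ξ) x) :=
            hP.1.monotone (htail.2 x)
        _ ≤ F (omega0 ^ log omega0 ξ) (F (ξ - omega0 ^ log omega0 ξ) x) := hP.2 _
        _ = F (omega0 ^ log omega0 ξ + (ξ - omega0 ^ log omega0 ξ)) x := by
            rw [hh.2.2.2]; rfl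
        _ = F ξ x := by rw [hsub2]

theorem main_ind (hf : Order.IsNormal f) (hh : WeakHyperation f F) (ρ : Ordinal.{v}) :
    (∀ a b : Ordinal.{v}, a + b < omega0 ^ ρ → Ed f (a + b) = Ed f a ∘ Ed f b) ∧
    (ρ ≠ 0 → ∀ ζ < omega0 ^ ρ, ∀ α, Ed f ζ (Pd f ρ α) = Pd f ρ α) := by
  have EdN : ∀ ζ : Ordinal.{v}, Order.IsNormal (Ed f ζ) := fun ζ => (core hf hh ζ).1
  have EdLe : ∀ (ζ : Ordinal.{v}) (x : Ordinal.{u}), Ed f ζ x ≤ F ζ x :=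
    fun ζ x => (core hf hh ζ).2 x
  induction ρ using Ordinal.induction with
  | _ ρ IH =>
  have D : ∀ a, ∀ b : Ordinal.{v}, a + b < omega0 ^ ρ → Ed f (a + b) = Ed f a ∘ Ed f b := by
    intro a
    induction a using Ordinal.induction with
    | _ a IHa =>
    intro b hab
    rcases eq_or_ne a 0 with rfl | ha
    · rw [zero_add, Ed, Eb_zero]; rfl
    rcases eq_or_ne b 0 with rfl | hb
    · rw [add_zero, Ed, Eb_zero]; rfl
    rcases lt_or_ge (log omega0 a) (log omega0 b) with hτσ | hστ
    · -- absorption case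
      have haσ : a < omega0 ^ log omega0 b := (lt_opow_iff_log_lt one_lt_omega0 ha).2 hτσ
      have habb : a + b = b := add_absorp haσ (opow_log_le_self omega0 hb)
      have hσρ : log omega0 b < ρ :=
        (lt_opow_iff_log_lt one_lt_omega0 hb).1 ((le_add_self (a := b) (b := a)).trans_lt hab)
      have hσ0 : log omega0 b ≠ 0 := by
        rintro h0
        rw [h0, opow_zero, Ordinal.lt_one_iff_zero] at haσ
        exact ha haσ
      rw [habb]
      funext x
      rw [Ed, Eb_pos _ hb]
      exact ((IH _ hσρ).2 hσ0 a haσ _).symm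
    · -- main case
      have hτle : omega0 ^ log omega0 a ≤ a := opow_log_le_self omega0 ha
      have hab0 : a + b ≠ 0 := fun h0 => ha (add_eq_zero_iff.1 h0).1
      have hlt : a + b < omega0 ^ succ (log omega0 a) := by
        apply principal_add_omega0_opow
        · exact lt_opow_succ_log_self one_lt_omega0 a
        · exact (lt_opow_succ_log_self one_lt_omega0 b).trans_le
            (opow_le_opow_right omega0_pos (succ_le_succ hστ))
      have hlog : log omega0 (a + b) = log omega0 a :=
        le_antisymm (lt_succ_iff.1 ((lt_opow_iff_log_lt one_lt_omega0 hab0).1 hlt))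
          ((opow_le_iff_le_log one_lt_omega0 hab0).1 (hτle.trans (le_self_add (a := a) (b := b))))
      have ha' : omega0 ^ log omega0 a + (a - omega0 ^ log omega0 a) = a :=
        Ordinal.add_sub_cancel_of_le hτle
      have htail : a + b - omega0 ^ log omega0 a = a - omega0 ^ log omega0 a + b := by
        calc a + b - omega0 ^ log omega0 a
            = omega0 ^ log omega0 a + (a - omega0 ^ log omega0 a + b)
              - omega0 ^ log omega0 a := by rw [← add_assoc, ha']
          _ = a - omega0 ^ log omega0 a + b := by rw [Ordinal.add_sub_cancel]
      have htb : a - omega0 ^ log omega0 a + b < omega0 ^ ρ :=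
        (add_le_add_left (Ordinal.sub_le_self _ _) b).trans_lt hab
      have hrec := IHa _ (sub_log_lt ha) b htb
      rw [Ed] at hrec
      rw [Ed, Eb_pos _ hab0, hlog, htail, hrec, Eb_pos _ ha]
      rfl
  refine ⟨D, fun hρ0 ζ hζ α => ?_⟩
  have hne : Nonempty (Iio (omega0 ^ ρ)) := ⟨⟨0, opow_pos ρ omega0_pos⟩⟩
  have hEdop : ∀ β : Ordinal.{u}, Gd (Ed f) ρ β = Ed f (omega0 ^ ρ) β := by
    intro β
    rw [Ed_opow, Pd_pos f hρ0]
  have key : ∀ x y : Ordinal.{u}, x ≤ F (omega0 ^ ρ) y →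
      Ed f ζ (⨆ ζ' : Iio (omega0 ^ ρ), Ed f ζ'.1 x)
        = ⨆ ζ' : Iio (omega0 ^ ρ), Ed f ζ'.1 x := by
    intro x y hxy
    have bdd1 : BddAbove (Set.range fun ζ' : Iio (omega0 ^ ρ) => Ed f ζ'.1 x) := by
      refine ⟨F (omega0 ^ ρ) y, ?_⟩
      rintro w ⟨⟨ζ', hζ'⟩, rfl⟩
      exact (EdLe ζ' x).trans (wh_absorb hh hζ' hxy)
    rw [(EdN ζ).map_iSup bdd1]
    have heq : ∀ ζ' : Iio (omega0 ^ ρ), ζ + ζ'.1 < omega0 ^ ρ :=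
      fun ζ' => principal_add_omega0_opow ρ hζ ζ'.2
    have bdd2 : BddAbove (Set.range fun ζ' : Iio (omega0 ^ ρ) => Ed f ζ (Ed f ζ'.1 x)) := by
      refine ⟨F (omega0 ^ ρ) y, ?_⟩
      rintro w ⟨⟨ζ', hζ'⟩, rfl⟩
      have h1 : Ed f ζ (Ed f ζ' x) = Ed f (ζ + ζ') x := by
        rw [D ζ ζ' (heq ⟨ζ', hζ'⟩)]; rfl
      dsimp only
      rw [h1]
      exact (EdLe _ x).trans (wh_absorb hh (heq ⟨ζ', hζ'⟩) hxy)
    apply le_antisymm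
    · refine ciSup_le ?_
      rintro ⟨ζ', hζ'⟩
      have h1 : Ed f ζ (Ed f ζ' x) = Ed f (ζ + ζ') x := by
        rw [D ζ ζ' (heq ⟨ζ', hζ'⟩)]; rfl
      rw [h1]
      exact le_ciSup bdd1 ⟨ζ + ζ', heq ⟨ζ', hζ'⟩⟩
    · refine ciSup_le ?_
      rintro ⟨ζ', hζ'⟩
      exact ((EdN ζ).strictMono.le_apply).trans (le_ciSup bdd2 ⟨ζ', hζ'⟩)
  rw [Pd_pos f hρ0]
  induction α using limitRecOn with
  | zero =>
    rw [Gd_zero]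
    exact key 0 0 zero_le
  | add_one α ih =>
    rw [Gd_succ]
    refine key _ (α + 1) ?_
    have h1 : Gd (Ed f) ρ α ≤ F (omega0 ^ ρ) α := by
      rw [hEdop]; exact EdLe _ _
    have hα : α < α + 1 := by rw [add_one_eq_succ]; exact lt_succ α
    have h2 : F (omega0 ^ ρ) α + 1 ≤ F (omega0 ^ ρ) (α + 1) := by
      have := (hh.1 (omega0 ^ ρ)).strictMono hα
      rw [add_one_eq_succ]
      exact succ_le_of_lt this
    exact (add_le_add_left h1 1).trans h2
  | limit l hl ih =>
    have hno : Nonempty (Iio l) := ⟨⟨0, hl.pos⟩⟩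
    have hbl : BddAbove (Set.range fun β : Iio l => Gd (Ed f) ρ β.1) := by
      refine ⟨F (omega0 ^ ρ) l, ?_⟩
      rintro w ⟨⟨β, hβ⟩, rfl⟩
      dsimp only
      rw [hEdop]
      exact (EdLe _ _).trans ((hh.1 _).monotone hβ.le)
    rw [Gd_limit _ _ hl, (EdN ζ).map_iSup hbl]
    exact iSup_congr fun β => ih β.1 β.2

theorem Ed_add (hf : Order.IsNormal f) (hh : WeakHyperation f F) (a b : Ordinal.{v}) :
    Ed f (a + b) = Ed f a ∘ Ed f b := by
  refine (main_ind hf hh (a + b + 1)).1 a b ?_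
  rw [add_one_eq_succ]
  exact (lt_succ _).trans_le (right_le_opow _ one_lt_omega0)

theorem Ed_one : Ed.{u, v} f 1 = f := by
  rw [Ed, Eb_pos _ one_ne_zero, log_one_right, opow_zero, sub_self, Eb_zero, Pd_zero,
    Function.comp_id]

theorem wh_Ed (hf : Order.IsNormal f) (hh : WeakHyperation f F) :
    WeakHyperation f (Ed.{u, v} f) :=
  ⟨fun ζ => (core hf hh ζ).1, Eb_zero _, Ed_one, fun a b => Ed_add hf hh a b⟩

end WithF

end HypRecAux


open HypRecAux in
theorem hyperation_recursion (f : Ordinal → Ordinal) (hf : Order.IsNormal f)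
    (F : Ordinal → Ordinal → Ordinal) (hF : IsHyperation f F) :
    ∀ ρ : Ordinal, 0 < ρ →
      (F (Ordinal.omega0 ^ ρ) 0 = ⨆ ζ : Set.Iio (Ordinal.omega0 ^ ρ), F ζ.1 0) ∧
      (∀ ξ : Ordinal, F (Ordinal.omega0 ^ ρ) (ξ + 1) =
        ⨆ ζ : Set.Iio (Ordinal.omega0 ^ ρ), F ζ.1 (F (Ordinal.omega0 ^ ρ) ξ + 1)) ∧
      (∀ l : Ordinal, Order.IsSuccLimit l →
        F (Ordinal.omega0 ^ ρ) l = ⨆ ξ : Set.Iio l, F (Ordinal.omega0 ^ ρ) ξ.1) := by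
  intro ρ hρ
  have hFE : F = Ed f := by
    funext ξ x
    exact le_antisymm (hF.2 _ (wh_Ed hf hF.1) ξ x) ((core hf hF.1 ξ).2 x)
  subst hFE
  refine ⟨?_, ?_, ?_⟩
  · rw [Ed_opow, Pd_pos f hρ.ne', Gd_zero]
  · intro ξ
    rw [Ed_opow, Pd_pos f hρ.ne', Gd_succ]
  · intro l hl
    rw [Ed_opow, Pd_pos f hρ.ne', Gd_limit _ _ hl]
end

section
/- Let f be a normal function with hyperation F, let ξ be an ordinal, and let G be the hyperation of the normal function F ξ. Then for every ordinal ζ, G ζ = F (ξ * ζ), where ξ * ζ is ordinal multiplication. -/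
open Ordinal

theorem hyperation_of_hyperate (f : Ordinal → Ordinal) (hf : Order.IsNormal f)
    (F : Ordinal → Ordinal → Ordinal) (hF : IsHyperation f F)
    (ξ : Ordinal) (G : Ordinal → Ordinal → Ordinal) (hG : IsHyperation (F ξ) G) :
    ∀ ζ : Ordinal, G ζ = F (ξ * ζ) := by
  obtain ⟨⟨Fnorm, F0, F1, Fadd⟩, Fmin⟩ := hF
  obtain ⟨⟨Gnorm, G0, G1, Gadd⟩, Gmin⟩ := hG
  -- pointwise monotonicity of F in the exponent
  have Fmono : ∀ {a b : Ordinal} (α : Ordinal), a ≤ b → F a α ≤ F b α := by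
    intro a b α hab
    have hdec : a + (b - a) = b := Ordinal.add_sub_cancel_of_le hab
    calc F a α ≤ F a (F (b - a) α) := (Fnorm a).monotone (Fnorm (b - a)).strictMono.le_apply
      _ = F (a + (b - a)) α := by rw [Fadd]; rfl
      _ = F b α := by rw [hdec]
  -- direction 1 : G ζ ≤ F (ξ * ζ)
  have WH : WeakHyperation (F ξ) (fun ζ => F (ξ * ζ)) := by
    refine ⟨fun ζ => Fnorm _, ?_, ?_, fun a b => ?_⟩
    · show F (ξ * 0) = id; rw [mul_zero, F0]
    · show F (ξ * 1) = F ξ; rw [mul_one]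
    · show F (ξ * (a + b)) = F (ξ * a) ∘ F (ξ * b); rw [mul_add, Fadd]
  -- direction 2 : F (ξ * ζ) ≤ G ζ
  have key : ∀ ζ α : Ordinal, F (ξ * ζ) α ≤ G ζ α := by
    rcases eq_or_ne ξ 0 with rfl | hξ
    · intro ζ α
      rw [zero_mul, F0]
      exact (Gnorm ζ).strictMono.le_apply
    · intro ζ
      induction ζ using Ordinal.induction with
      | h ζ IH =>
      rcases eq_or_ne ζ 0 with rfl | hζ0
      · intro α; rw [mul_zero, F0, G0]
      rcases eq_or_ne ζ 1 with rfl | hζ1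
      · intro α; rw [mul_one, G1]
      by_cases hP : ∀ a < ζ, ∀ b < ζ, a + b < ζ
      · -- additively indecomposable case
        have h1ζ : 1 < ζ := lt_of_le_of_ne (Ordinal.one_le_iff_ne_zero.2 hζ0) (Ne.symm hζ1)
        set lam := ξ * ζ with hlam
        have hlam0 : lam ≠ 0 := mul_ne_zero hξ hζ0
        have h1lam : 1 < lam := by
          refine lt_of_lt_of_le h1ζ ?_
          calc ζ = 1 * ζ := (one_mul ζ).symm
            _ ≤ ξ * ζ := mul_le_mul_left (Ordinal.one_le_iff_ne_zero.2 hξ) ζ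
        have hζind : ∀ η < ζ, η + ζ = ζ :=
          Ordinal.principal_add_iff_add_left_eq_self.1 (fun a b ha hb => hP a ha b hb)
        have hsmall : ∀ δ < lam, ∃ η < ζ, δ < ξ * η := by
          intro δ hδ
          rw [hlam] at hδ
          refine ⟨δ / ξ + 1, hP _ ((Ordinal.div_lt hξ).2 hδ) 1 h1ζ, ?_⟩
          rw [mul_add, mul_one]
          calc δ = ξ * (δ / ξ) + δ % ξ := (Ordinal.div_add_mod δ ξ).symm
            _ < ξ * (δ / ξ) + ξ := (add_lt_add_iff_left _).2 (Ordinal.mod_lt δ hξ)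
        have hlamind : ∀ δ < lam, δ + lam = lam := by
          intro δ hδ
          obtain ⟨η, hη, hδη⟩ := hsmall δ hδ
          refine le_antisymm ?_ le_add_self
          calc δ + lam ≤ ξ * η + ξ * ζ := add_le_add hδη.le le_rfl
            _ = ξ * (η + ζ) := (mul_add ξ η ζ).symm
            _ = lam := by rw [hζind η hη]
        have hfix : ∀ δ < lam, ∀ β : Ordinal, F δ (G ζ β) = G ζ β := by
          intro δ hδ β
          obtain ⟨η, hη, hδη⟩ := hsmall δ hδ
          refine le_antisymm ?_ (Fnorm δ).strictMono.le_apply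
          calc F δ (G ζ β) ≤ F (ξ * η) (G ζ β) := Fmono _ hδη.le
            _ ≤ G η (G ζ β) := IH η hη _
            _ = G (η + ζ) β := by rw [Gadd]; rfl
            _ = G ζ β := by rw [hζind η hη]
        have hdivmod : ∀ q r : Ordinal, r < lam →
            (lam * q + r) / lam = q ∧ (lam * q + r) % lam = r := by
          intro q r hr
          constructor
          · rw [Ordinal.mul_add_div _ hlam0, Ordinal.div_eq_zero_of_lt hr, add_zero]
          · rw [Ordinal.mul_add_mod_self, Ordinal.mod_eq_of_lt hr]
        set h : Ordinal → Ordinal → Ordinal :=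
          fun η => G (ζ * (η / lam)) ∘ F (η % lam) with hh
        have hWH : WeakHyperation f h := by
          refine ⟨fun η => (Gnorm _).comp (Fnorm _), ?_, ?_, ?_⟩
          · show G (ζ * (0 / lam)) ∘ F (0 % lam) = id
            rw [Ordinal.zero_div, Ordinal.zero_mod, mul_zero, G0, F0]
            rfl
          · show G (ζ * (1 / lam)) ∘ F (1 % lam) = f
            rw [Ordinal.div_eq_zero_of_lt h1lam, Ordinal.mod_eq_of_lt h1lam, mul_zero, G0, F1]
            rfl
          · intro η η'
            have hη := Ordinal.div_add_mod η lam
            have hη' := Ordinal.div_add_mod η' lam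
            set q := η / lam with hq
            set r := η % lam with hr0
            set q' := η' / lam with hq'
            set r' := η' % lam with hr0'
            have hr : r < lam := Ordinal.mod_lt η hlam0
            have hr' : r' < lam := Ordinal.mod_lt η' hlam0
            rcases eq_or_ne q' 0 with hq'0 | hq'0
            · have hη'' : η' = r' := by rw [← hη', hq'0, mul_zero, zero_add]
              have hrr' : r + r' < lam := by
                calc r + r' < r + lam := (add_lt_add_iff_left r).2 hr'
                  _ = lam := hlamind r hr
              have hsum : η + η' = lam * q + (r + r') := by
                rw [← hη, hη'', add_assoc]
              obtain ⟨hdiv, hmod⟩ := hdivmod q (r + r') hrr'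
              funext α
              show G (ζ * ((η + η') / lam)) (F ((η + η') % lam) α)
                = G (ζ * q) (F r (G (ζ * q') (F r' α)))
              rw [hsum, hdiv, hmod, hq'0, mul_zero, G0]
              have hFrr' : F (r + r') α = F r (F r' α) := by rw [Fadd]; rfl
              rw [hFrr']
              rfl
            · have h1q' : 1 ≤ q' := Ordinal.one_le_iff_ne_zero.2 hq'0
              have hq'' : 1 + (q' - 1) = q' := Ordinal.add_sub_cancel_of_le h1q'
              have hlamq' : r + lam * q' = lam * q' := by
                conv_lhs => rw [← hq'']
                conv_rhs => rw [← hq'']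
                rw [mul_add, mul_one, ← add_assoc, hlamind r hr]
              have hsum : η + η' = lam * (q + q') + r' := by
                rw [← hη, ← hη', add_assoc, ← add_assoc r, hlamq', ← add_assoc, ← mul_add]
              obtain ⟨hdiv, hmod⟩ := hdivmod (q + q') r' hr'
              funext α
              show G (ζ * ((η + η') / lam)) (F ((η + η') % lam) α)
                = G (ζ * q) (F r (G (ζ * q') (F r' α)))
              rw [hsum, hdiv, hmod, mul_add, Gadd]
              show G (ζ * q) (G (ζ * q') (F r' α)) = _
              congr 1
              have hsplit : ζ * q' = ζ + ζ * (q' - 1) := by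
                conv_lhs => rw [← hq'']
                rw [mul_add, mul_one]
              rw [hsplit, Gadd]
              show G ζ (G (ζ * (q' - 1)) (F r' α)) = F r (G ζ (G (ζ * (q' - 1)) (F r' α)))
              exact (hfix r hr _).symm
        intro α
        have hmin := Fmin h hWH lam α
        refine hmin.trans (le_of_eq ?_)
        show G (ζ * (lam / lam)) (F (lam % lam) α) = G ζ α
        rw [Ordinal.div_self hlam0, Ordinal.mod_self, mul_one, F0]
        rfl
      · push_neg at hP
        obtain ⟨a, ha, b, hb, hab⟩ := hP
        intro α
        have hb' : ζ - a < ζ := lt_of_le_of_lt (Ordinal.sub_le.2 hab) hb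
        have hdec : a + (ζ - a) = ζ := Ordinal.add_sub_cancel_of_le ha.le
        calc F (ξ * ζ) α = F (ξ * a + ξ * (ζ - a)) α := by rw [← mul_add, hdec]
          _ = F (ξ * a) (F (ξ * (ζ - a)) α) := by rw [Fadd]; rfl
          _ ≤ F (ξ * a) (G (ζ - a) α) := (Fnorm _).monotone (IH _ hb' α)
          _ ≤ G a (G (ζ - a) α) := IH a ha _
          _ = G (a + (ζ - a)) α := by rw [Gadd]; rfl
          _ = G ζ α := by rw [hdec]
  intro ζ
  funext α
  exact le_antisymm (Gmin _ WH ζ α) (key ζ α)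
end

section
/- Let f be a normal function with hyperation F. Then for every ordinal α, F (ω^(α+1)) = Ordinal.deriv (F (ω^α)), i.e., the ω^(α+1)-th hyperate of f is the derivative (the normal function enumerating the fixed points) of the ω^α-th hyperate of f. -/
open Ordinal

namespace HypAux

open Ordinal

universe u v

theorem enumOrd_le_of_range_subset {S : Set Ordinal.{u}} {f : Ordinal.{u} → Ordinal.{u}}
    (hS : ¬ BddAbove S) (hf : StrictMono f) (hfS : ∀ x, f x ∈ S) (x : Ordinal.{u}) :
    enumOrd S x ≤ f x := by
  induction x using Ordinal.induction with
  | h x IH => exact enumOrd_le_of_forall_lt (hfS x) fun b hb => (IH b hb).trans_lt (hf hb)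

/-- The Veblen-style hierarchy over a normal function `D`. -/
noncomputable def e (D : Ordinal.{u} → Ordinal.{u}) : Ordinal.{v} → Ordinal.{u} → Ordinal.{u}
  | a => if a = 0 then D else enumOrd {x | ∀ b < a, e D b x = x}
termination_by a => a
decreasing_by exact ‹_›

theorem e_zero (D : Ordinal.{u} → Ordinal.{u}) : e.{u, v} D 0 = D := by rw [e]; simp

theorem e_pos (D : Ordinal.{u} → Ordinal.{u}) {a : Ordinal.{v}} (ha : a ≠ 0) :
    e D a = enumOrd {x | ∀ b < a, e D b x = x} := by rw [e]; simp [ha]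

/-- The key properties of the hierarchy `e D`, established simultaneously by induction,
using a majorant family `M` to witness unboundedness of the classes of common fixed
points. -/
theorem e_key {D : Ordinal.{u} → Ordinal.{u}} (hD : Order.IsNormal D)
    (M : Ordinal.{v} → Ordinal.{u} → Ordinal.{u})
    (hM : ∀ a, Order.IsNormal (M a))
    (hMfix : ∀ b a : Ordinal.{v}, b < a → ∀ x, M b (M a x) = M a x)
    (hDM : ∀ x, D x ≤ M 0 x) :
    ∀ a : Ordinal.{v}, Order.IsNormal (e D a) ∧ (∀ x, e D a x ≤ M a x) ∧
      ∀ b < a, ∀ x, e D b (e D a x) = e D a x := by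
  intro a
  induction a using Ordinal.induction with
  | h a IH =>
    rcases eq_or_ne a 0 with rfl | ha
    · refine ⟨by rwa [e_zero], fun x => by rw [e_zero]; exact hDM x, fun b hb => ?_⟩
      exact absurd hb (zero_le (a := b)).not_gt
    · set S : Set Ordinal.{u} := {x | ∀ b < a, e D b x = x} with hS_def
      have hmem : ∀ x, M a x ∈ S := by
        intro x b hb
        refine le_antisymm ?_ (IH b hb).1.strictMono.le_apply
        calc e D b (M a x) ≤ M b (M a x) := (IH b hb).2.1 _
          _ = M a x := hMfix b a hb x
      have hSunb : ¬ BddAbove S := by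
        rw [not_bddAbove_iff]
        intro x
        exact ⟨M a (x + 1), hmem (x + 1),
          lt_of_lt_of_le (lt_add_one x) (hM a).strictMono.le_apply⟩
      have hScl : IsClosed S := by
        rw [isClosed_iff_iSup]
        intro ι hι f hf b hb
        have : ∀ i, e D b (f i) = f i := fun i => hf i b hb
        rw [(IH b hb).1.map_iSup bddAbove_of_small]
        exact iSup_congr this
      refine ⟨?_, ?_, ?_⟩
      · rw [e_pos D ha]
        exact (enumOrd_isNormal_iff_isClosed hSunb).2 hScl
      · intro x
        rw [e_pos D ha]
        exact enumOrd_le_of_range_subset hSunb (hM a).strictMono hmem x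
      · intro b hb x
        rw [e_pos D ha]
        exact enumOrd_mem hSunb x b hb

section K

variable {D : Ordinal.{u} → Ordinal.{u}}

theorem sub_opow_log_lt_self {q : Ordinal.{v}} (hq : q ≠ 0) : q - ω ^ log ω q < q := by
  set c := ω ^ log ω q with hc
  have hcq : c ≤ q := opow_log_le_self ω hq
  have hc0 : c ≠ 0 := opow_ne_zero _ omega0_ne_zero
  rw [Ordinal.sub_lt_of_le hcq]
  -- show `q < c + q`
  have hdm : c * (q / c) + q % c = q := div_add_mod q c
  have hdiv_lt : q / c < ω := by
    rw [div_lt hc0, ← opow_succ]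
    exact lt_opow_succ_log_self one_lt_omega0 q
  obtain ⟨n, hn⟩ := lt_omega0.1 hdiv_lt
  have hmod : q % c < c := mod_lt q hc0
  calc q = c * (q / c) + q % c := hdm.symm
    _ < c * (q / c) + c := by exact (add_lt_add_iff_left _).2 hmod
    _ = c * (q / c + 1) := by rw [mul_add_one]
    _ = c * (1 + q / c) := by rw [hn]; norm_cast; rw [Nat.add_comm]
    _ = c + c * (q / c) := by rw [mul_add, mul_one]
    _ ≤ c + (c * (q / c) + q % c) := by
        rw [← add_assoc]; exact le_add_right le_rfl
    _ = c + q := by rw [hdm]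

/-- An explicit weak hyperation of `D`, by recursion on Cantor normal form. -/
noncomputable def K (D : Ordinal.{u} → Ordinal.{u}) : Ordinal.{v} → Ordinal.{u} → Ordinal.{u}
  | q => if hq : q = 0 then id else e D (log ω q) ∘ K D (q - ω ^ log ω q)
termination_by q => q
decreasing_by exact sub_opow_log_lt_self hq

theorem K_zero (D : Ordinal.{u} → Ordinal.{u}) : K.{u, v} D 0 = id := by rw [K]; simp

theorem K_pos (D : Ordinal.{u} → Ordinal.{u}) {q : Ordinal.{v}} (hq : q ≠ 0) :
    K D q = e D (log ω q) ∘ K D (q - ω ^ log ω q) := by rw [K]; simp [hq]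

theorem log_eq {a x : Ordinal.{v}} (h₁ : ω ^ a ≤ x) (h₂ : x < ω ^ (a + 1)) : log ω x = a := by
  have hx : x ≠ 0 := ((opow_pos a omega0_pos).trans_le h₁).ne'
  apply le_antisymm
  · by_contra hlt
    push_neg at hlt
    have : a + 1 ≤ log ω x := by rwa [add_one_eq_succ, Order.succ_le_iff]
    have := (opow_le_iff_le_log one_lt_omega0 hx).2 this
    exact absurd h₂ (not_lt.2 this)
  · exact (opow_le_iff_le_log one_lt_omega0 hx).1 h₁

variable (hDfp : ∀ b a : Ordinal.{v}, b < a → ∀ x, e D b (e D a x) = e D a x)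
variable (hDnorm : ∀ a : Ordinal.{v}, Order.IsNormal (e D a))

include hDfp in
theorem K_omega_opow_add (a t : Ordinal.{v}) :
    K D (ω ^ a + t) = e D a ∘ K D t := by
  rcases lt_or_ge t (ω ^ (a + 1)) with ht | ht
  · -- the leading exponent of `ω ^ a + t` is `a`
    have hpos : ω ^ a + t ≠ 0 :=
      ((opow_pos a omega0_pos).trans_le (le_add_right le_rfl)).ne'
    have hlog : log ω (ω ^ a + t) = a := by
      apply log_eq (le_add_right le_rfl)
      exact principal_add_omega0_opow _
        ((opow_lt_opow_iff_right one_lt_omega0).2 (lt_add_one a)) ht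
    rw [K_pos D hpos, hlog, Ordinal.add_sub_cancel]
  · -- `ω ^ a` is absorbed
    have ht0 : t ≠ 0 := ((opow_pos (a + 1) omega0_pos).trans_le ht).ne'
    have habs : ω ^ a + t = t :=
      add_absorp ((opow_lt_opow_iff_right one_lt_omega0).2 (lt_add_one a)) ht
    have hab : a < log ω t := by
      have : a + 1 ≤ log ω t := (opow_le_iff_le_log one_lt_omega0 ht0).1 ht
      exact lt_of_lt_of_le (lt_add_one a) this
    rw [habs, K_pos D ht0]
    funext x
    simp only [Function.comp_apply]
    rw [hDfp _ _ hab]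

include hDnorm in
theorem isNormal_K (q : Ordinal.{v}) : Order.IsNormal (K D q) := by
  induction q using Ordinal.induction with
  | h q IH =>
    rcases eq_or_ne q 0 with rfl | hq
    · rw [K_zero]; exact Order.IsNormal.id
    · rw [K_pos D hq]
      exact (hDnorm _).comp (IH _ (sub_opow_log_lt_self hq))

include hDfp in
theorem K_add (q₁ q₂ : Ordinal.{v}) :
    K D (q₁ + q₂) = K D q₁ ∘ K D q₂ := by
  induction q₁ using Ordinal.induction with
  | h q₁ IH =>
    rcases eq_or_ne q₁ 0 with rfl | hq
    · simp [K_zero]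
    · have hle : ω ^ log ω q₁ ≤ q₁ := opow_log_le_self ω hq
      have hdec : q₁ = ω ^ log ω q₁ + (q₁ - ω ^ log ω q₁) :=
        (Ordinal.add_sub_cancel_of_le hle).symm
      have hs : q₁ - ω ^ log ω q₁ < q₁ := sub_opow_log_lt_self hq
      calc K D (q₁ + q₂) = K D (ω ^ log ω q₁ + ((q₁ - ω ^ log ω q₁) + q₂)) := by
            rw [← add_assoc, ← hdec]
        _ = e D (log ω q₁) ∘ K D ((q₁ - ω ^ log ω q₁) + q₂) := K_omega_opow_add hDfp _ _
        _ = e D (log ω q₁) ∘ (K D (q₁ - ω ^ log ω q₁) ∘ K D q₂) := by rw [IH _ hs]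
        _ = (e D (log ω q₁) ∘ K D (q₁ - ω ^ log ω q₁)) ∘ K D q₂ := rfl
        _ = K D q₁ ∘ K D q₂ := by rw [← K_pos D hq]

theorem K_one : K.{u, v} D 1 = D := by
  have h1 : (1 : Ordinal.{v}) ≠ 0 := one_ne_zero
  rw [K_pos D h1, log_eq_zero one_lt_omega0, opow_zero, sub_self, K_zero, e_zero]
  rfl

end K

end HypAux


open HypAux in
theorem hyperation_succ_veblen (f : Ordinal → Ordinal) (hf : Order.IsNormal f)
    (F : Ordinal → Ordinal → Ordinal) (hF : IsHyperation f F) :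
    ∀ α : Ordinal, F (Ordinal.omega0 ^ (α + 1)) = Ordinal.deriv (F (Ordinal.omega0 ^ α)) := by
  obtain ⟨⟨hn, h0, h1, hadd⟩, hmin⟩ := hF
  intro α
  set g : Ordinal → Ordinal := F (ω ^ α) with hg_def
  have hg : Order.IsNormal g := hn _
  set D : Ordinal → Ordinal := Ordinal.deriv g with hD_def
  have hD : Order.IsNormal D := isNormal_deriv g
  have hlt : ω ^ α < ω ^ (α + 1) := (opow_lt_opow_iff_right one_lt_omega0).2 (lt_add_one α)
  have he0 : (ω : Ordinal) ^ (α + 1) ≠ 0 := opow_ne_zero _ omega0_ne_zero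
  -- all values of `F (ω ^ (α+1))` are fixed points of `g`
  have hfix : ∀ ζ, g (F (ω ^ (α + 1)) ζ) = F (ω ^ (α + 1)) ζ := by
    intro ζ
    have habs : ω ^ α + ω ^ (α + 1) = ω ^ (α + 1) := add_omega0_opow hlt
    have := congrFun (hadd (ω ^ α) (ω ^ (α + 1))) ζ
    rw [habs] at this
    exact this.symm
  -- the easy direction: `deriv g` is pointwise at most `F (ω ^ (α+1))`
  have hge : ∀ ζ, D ζ ≤ F (ω ^ (α + 1)) ζ := by
    intro ζ
    induction ζ using Ordinal.limitRecOn with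
    | zero =>
      rw [hD_def, deriv_zero_right]
      exact nfp_le_fp hg.strictMono.monotone zero_le (hfix 0).le
    | add_one ζ IH =>
      rw [hD_def, ← Order.succ_eq_add_one, deriv_succ]
      refine nfp_le_fp hg.strictMono.monotone ?_ (hfix _).le
      have h1' : Ordinal.deriv g ζ < F (ω ^ (α + 1)) (Order.succ ζ) :=
        lt_of_le_of_lt IH ((hn _).strictMono (Order.lt_succ ζ))
      rwa [Order.succ_le_iff]
    | limit ζ hζ IH =>
      refine ((isNormal_deriv g).le_iff_forall_le hζ).2 fun b hb => ?_
      exact (IH b hb).trans ((hn _).strictMono.monotone hb.le)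
  -- fixed points of `g` are fixed by `F r` for `r < ω ^ (α+1)`
  have hfp_small : ∀ r < ω ^ (α + 1), ∀ x, g x = x → F r x = x := by
    intro r hr x hx
    have hFn : ∀ n : ℕ, F (ω ^ α * n) x = x := by
      intro n
      induction n with
      | zero => simp [h0]
      | succ n IH =>
        have : (ω ^ α : Ordinal) * (n + 1) = ω ^ α * n + ω ^ α := by
          push_cast
          rw [mul_add, mul_one]
        rw [show ((n + 1 : ℕ) : Ordinal) = (n : Ordinal) + 1 by push_cast; ring, this]
        have := congrFun (hadd (ω ^ α * n) (ω ^ α)) x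
        rw [this]
        simp only [Function.comp_apply]
        rw [← hg_def, hx, IH]
    -- find `n` with `r ≤ ω ^ α * n`
    rw [add_one_eq_succ, opow_succ] at hr
    obtain ⟨c, hc, hrc⟩ := (lt_mul_iff_of_isSuccLimit isSuccLimit_omega0).1 hr
    obtain ⟨n, rfl⟩ := lt_omega0.1 hc
    have hrle : r ≤ ω ^ α * n := hrc.le
    have hmono : F r x ≤ F (ω ^ α * n) x := by
      have := Ordinal.add_sub_cancel_of_le hrle
      calc F r x ≤ F r (F (ω ^ α * n - r) x) :=
            (hn r).strictMono.monotone (hn _).strictMono.le_apply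
        _ = F (r + (ω ^ α * n - r)) x := (congrFun (hadd r _) x).symm
        _ = F (ω ^ α * n) x := by rw [this]
    exact le_antisymm (by rw [hFn n] at hmono; exact hmono) (hn r).strictMono.le_apply
  -- the hard direction, via the explicit weak hyperation built from `K D`
  set E := ω ^ (α + 1) with hE
  -- set up the hierarchy `e D`, majorized by `a ↦ F (E * ω ^ a)`
  have hMfix : ∀ b a : Ordinal, b < a → ∀ x, F (E * ω ^ b) (F (E * ω ^ a) x) = F (E * ω ^ a) x := by
    intro b a hab x
    have habs : E * ω ^ b + E * ω ^ a = E * ω ^ a := by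
      rw [← mul_add, add_omega0_opow ((opow_lt_opow_iff_right one_lt_omega0).2 hab)]
    calc F (E * ω ^ b) (F (E * ω ^ a) x) = F (E * ω ^ b + E * ω ^ a) x :=
          (congrFun (hadd _ _) x).symm
      _ = F (E * ω ^ a) x := by rw [habs]
  have hDM : ∀ x, D x ≤ F (E * ω ^ (0 : Ordinal)) x := by
    intro x
    rw [opow_zero, mul_one]
    exact hge x
  have hkey := e_key hD (fun a => F (E * ω ^ a)) (fun a => hn _) hMfix hDM
  have hDnorm : ∀ a, Order.IsNormal (e D a) := fun a => (hkey a).1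
  have hDfp : ∀ b a : Ordinal, b < a → ∀ x, e D b (e D a x) = e D a x :=
    fun b a hab x => (hkey a).2.2 b hab x
  funext ζ
  apply le_antisymm
  · -- minimality applied to the explicit weak hyperation
    have hE1 : (1 : Ordinal) < E := by
      calc (1 : Ordinal) < ω := one_lt_omega0
        _ = ω ^ (1 : Ordinal) := (opow_one ω).symm
        _ ≤ E := opow_le_opow_right omega0_pos (le_add_left le_rfl)
    set h : Ordinal → Ordinal → Ordinal := fun ξ => K D (ξ / E) ∘ F (ξ % E) with hh
    have hK_fix : ∀ q ≠ 0, ∀ x, g (K D q x) = K D q x := by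
      intro q hq x
      have h1q : (1 : Ordinal) ≤ q := Ordinal.one_le_iff_ne_zero.2 hq
      have : q = 1 + (q - 1) := (Ordinal.add_sub_cancel_of_le h1q).symm
      rw [this, K_add hDfp]
      simp only [Function.comp_apply, K_one]
      exact deriv_fp hg _
    have hwh : WeakHyperation f h := by
      refine ⟨fun ξ => (isNormal_K hDnorm _).comp (hn _), ?_, ?_, ?_⟩
      · rw [hh]
        simp [Ordinal.zero_div, Ordinal.zero_mod, K_zero, h0]
      · rw [hh]
        simp only
        rw [div_eq_zero_of_lt hE1, mod_eq_of_lt hE1, K_zero, h1]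
        rfl
      · intro ξ ζ'
        have hr₁ : ξ % E < E := mod_lt ξ he0
        have hr₂ : ζ' % E < E := mod_lt ζ' he0
        have hξ : E * (ξ / E) + ξ % E = ξ := div_add_mod ξ E
        have hζ : E * (ζ' / E) + ζ' % E = ζ' := div_add_mod ζ' E
        rcases eq_or_ne (ζ' / E) 0 with hq2 | hq2
        · -- small second summand
          have hζ' : ζ' = ζ' % E := by
            conv_lhs => rw [← hζ]
            rw [hq2, mul_zero, zero_add]
          have hlt' : ξ % E + ζ' % E < E := principal_add_omega0_opow _ hr₁ hr₂
          have hsum : ξ + ζ' = E * (ξ / E) + (ξ % E + ζ' % E) := by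
            conv_lhs => rw [← hξ, hζ']
            rw [add_assoc]
          have hdiv : (ξ + ζ') / E = ξ / E := by
            rw [hsum, mul_add_div _ he0, div_eq_zero_of_lt hlt', add_zero]
          have hmod : (ξ + ζ') % E = ξ % E + ζ' % E := by
            rw [hsum, mul_add_mod_self, mod_eq_of_lt hlt']
          show K D ((ξ + ζ') / E) ∘ F ((ξ + ζ') % E) = _
          rw [hdiv, hmod, hadd]
          funext x
          simp only [Function.comp_apply, hh, hq2, K_zero, id_eq]
        · -- big second summand: `ξ % E` gets absorbed
          have habs : ξ % E + E * (ζ' / E) = E * (ζ' / E) := by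
            have h1q : (1 : Ordinal) ≤ ζ' / E := Ordinal.one_le_iff_ne_zero.2 hq2
            have hsplit : E * (ζ' / E) = E + E * (ζ' / E - 1) := by
              conv_lhs => rw [← Ordinal.add_sub_cancel_of_le h1q]
              rw [mul_add, mul_one]
            rw [hsplit, ← add_assoc, hE, add_omega0_opow hr₁]
          have hsum : ξ + ζ' = E * (ξ / E + ζ' / E) + ζ' % E := by
            rw [mul_add, add_assoc]
            conv_lhs => rw [← hξ, ← hζ]
            rw [add_assoc]
            congr 1
            rw [← add_assoc, habs]
          have hdiv : (ξ + ζ') / E = ξ / E + ζ' / E := by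
            rw [hsum, mul_add_div _ he0, div_eq_zero_of_lt hr₂, add_zero]
          have hmod : (ξ + ζ') % E = ζ' % E := by
            rw [hsum, mul_add_mod_self, mod_eq_of_lt hr₂]
          show K D ((ξ + ζ') / E) ∘ F ((ξ + ζ') % E) = _
          rw [hdiv, hmod, K_add hDfp]
          funext x
          simp only [Function.comp_apply, hh]
          congr 1
          exact (hfp_small _ hr₁ _ (hK_fix _ hq2 _)).symm
    have hle := hmin h hwh E ζ
    rw [hh] at hle
    simp only [Function.comp_apply] at hle
    rw [Ordinal.div_self he0, Ordinal.mod_self, h0, K_one] at hle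
    exact hle
  · exact hge ζ
end

section
/- Let f be a normal function with hyperation F. Then for every limit ordinal λ, the range of F (ω^λ) equals the intersection over all α < λ of the ranges of F (ω^α); i.e., Set.range (F (ω^λ)) = ⋂_{α<λ} Set.range (F (ω^α)). (This is the limit clause of the identification of the hyperates F (ω^α) with the α-th functions of the Veblen progression of f.) -/
open Ordinal Set

universe u v

section VebSection

/-- Fixed points of a normal function form a closed set. -/
theorem isClosed_fixedPoints' {g : Ordinal.{u} → Ordinal.{u}} (hg : Order.IsNormal g) :
    IsClosed (Function.fixedPoints g) := by
  rw [isClosed_iff_iSup]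
  intro ι hι p hp
  have : g (⨆ i, p i) = ⨆ i, p i := by
    rw [hg.map_iSup bddAbove_of_small]
    exact iSup_congr fun i => hp i
  exact this

variable (f : Ordinal.{u} → Ordinal.{u})

/-- The Veblen progression of `f`, with indices in an arbitrary universe. -/
noncomputable def Veb (α : Ordinal.{v}) : Ordinal.{u} → Ordinal.{u} :=
  limitRecOn α f (fun _ g => deriv g)
    (fun o _ ih =>
      enumOrd (⋂ (β : Ordinal.{v}) (hβ : β < o), Function.fixedPoints (ih β hβ)))

theorem Veb_zero : Veb f 0 = f := limitRecOn_zero _ _ _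

theorem Veb_succ (β : Ordinal.{v}) : Veb f (Order.succ β) = deriv (Veb f β) :=
  limitRecOn_succ _ _ _ _

theorem Veb_limit {o : Ordinal.{v}} (ho : Order.IsSuccLimit o) :
    Veb f o =
      enumOrd (⋂ (β : Ordinal.{v}) (_ : β < o), Function.fixedPoints (Veb f β)) := by
  rw [Veb, limitRecOn_limit _ _ _ _ ho]
  rfl

variable {f} (hf : Order.IsNormal f)
  {F : Ordinal.{v} → Ordinal.{u} → Ordinal.{u}} (hW : WeakHyperation f F)

include hW

/-- If the Veblen progression behaves below `o`, the range of `F (ω ^ o)` consists of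
common fixed points of all `Veb f β`, `β < o`. -/
theorem range_subset_fixedPoints {o : Ordinal.{v}}
    (hyp : ∀ β, β < o →
      Order.IsNormal (Veb f β) ∧ ∀ x, Veb f β x ≤ F (omega0 ^ β) x) :
    range (F (omega0 ^ o)) ⊆
      ⋂ (β : Ordinal.{v}) (_ : β < o), Function.fixedPoints (Veb f β) := by
  rintro _ ⟨y, rfl⟩
  refine Set.mem_iInter₂.2 fun β hβ => ?_
  have hβo : omega0 ^ β + omega0 ^ o = omega0 ^ o :=
    add_omega0_opow ((opow_lt_opow_iff_right one_lt_omega0).2 hβ)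
  have h2 : F (omega0 ^ β) (F (omega0 ^ o) y) = F (omega0 ^ o) y := by
    have := congrFun (hW.2.2.2 (omega0 ^ β) (omega0 ^ o)).symm y
    rwa [hβo] at this
  have h1 : Veb f β (F (omega0 ^ o) y) ≤ F (omega0 ^ o) y :=
    ((hyp β hβ).2 _).trans_eq h2
  exact le_antisymm h1 (hyp β hβ).1.strictMono.le_apply

include hf in
/-- The fundamental properties of the Veblen progression, proven by simultaneous
transfinite induction, using the weak hyperation `F` as a witness of unboundedness. -/
theorem Veb_main : ∀ α : Ordinal.{v},
    Order.IsNormal (Veb f α) ∧ (∀ x, Veb f α x ≤ F (omega0 ^ α) x) ∧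
      ∀ η, η < α → ∀ x, Veb f η (Veb f α x) = Veb f α x := by
  intro α
  induction α using limitRecOn with
  | zero =>
    refine ⟨by rwa [Veb_zero], fun x => ?_, fun η hη => absurd hη (zero_le (a := η)).not_gt⟩
    rw [Veb_zero, opow_zero, hW.2.2.1]
  | add_one β IH =>
    rw [← Order.succ_eq_add_one]
    obtain ⟨IH1, IH2, IH3⟩ := IH
    have hn : Order.IsNormal (Veb f (Order.succ β)) := by
      rw [Veb_succ]; exact isNormal_deriv _
    have hgn : Order.IsNormal (F (omega0 ^ Order.succ β)) := hW.1 _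
    have hfix : range (F (omega0 ^ Order.succ β)) ⊆ Function.fixedPoints (Veb f β) := by
      rintro _ ⟨y, rfl⟩
      have hβo : omega0 ^ β + omega0 ^ Order.succ β = omega0 ^ Order.succ β :=
        add_omega0_opow ((opow_lt_opow_iff_right one_lt_omega0).2 (Order.lt_succ β))
      have h2 : F (omega0 ^ β) (F (omega0 ^ Order.succ β) y) =
          F (omega0 ^ Order.succ β) y := by
        have := congrFun (hW.2.2.2 (omega0 ^ β) (omega0 ^ Order.succ β)).symm y
        rwa [hβo] at this
      exact le_antisymm ((IH2 _).trans_eq h2) IH1.strictMono.le_apply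
    have hle : ∀ x, Veb f (Order.succ β) x ≤ F (omega0 ^ Order.succ β) x := by
      intro x
      rw [Veb_succ, deriv_eq_enumOrd IH1]
      calc enumOrd (Function.fixedPoints (Veb f β)) x
          ≤ enumOrd (range (F (omega0 ^ Order.succ β))) x :=
            enumOrd_le_of_subset
              hgn.strictMono.not_bddAbove_range_of_wellFoundedLT hfix x
        _ = F (omega0 ^ Order.succ β) x := by rw [enumOrd_range hgn.strictMono]
    refine ⟨hn, hle, fun η hη x => ?_⟩
    rw [Veb_succ]
    have key : Veb f β (deriv (Veb f β) x) = deriv (Veb f β) x := Ordinal.deriv_fp IH1 x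
    rcases lt_or_eq_of_le (Order.lt_succ_iff.1 hη) with hη' | rfl
    · conv_lhs => rw [← key]
      rw [IH3 η hη', key]
    · exact key
  | limit o ho IH =>
    set S : Set Ordinal.{u} :=
      ⋂ (β : Ordinal.{v}) (_ : β < o), Function.fixedPoints (Veb f β) with hS
    have hsub : range (F (omega0 ^ o)) ⊆ S :=
      range_subset_fixedPoints hW fun β hβ => ⟨(IH β hβ).1, (IH β hβ).2.1⟩
    have hgn : Order.IsNormal (F (omega0 ^ o)) := hW.1 _
    have hrange_unbdd : ¬ BddAbove (range (F (omega0 ^ o))) :=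
      hgn.strictMono.not_bddAbove_range_of_wellFoundedLT
    have hSunbdd : ¬ BddAbove S := fun h => hrange_unbdd (h.mono hsub)
    have hSclosed : IsClosed S :=
      isClosed_iInter fun β => isClosed_iInter fun hβ => isClosed_fixedPoints' (IH β hβ).1
    have hVl : Veb f o = enumOrd S := Veb_limit f ho
    have hn : Order.IsNormal (Veb f o) := by
      rw [hVl]; exact (enumOrd_isNormal_iff_isClosed hSunbdd).2 hSclosed
    refine ⟨hn, fun x => ?_, fun η hη x => ?_⟩
    · rw [hVl]
      calc enumOrd S x
          ≤ enumOrd (range (F (omega0 ^ o))) x :=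
            enumOrd_le_of_subset hrange_unbdd hsub x
        _ = F (omega0 ^ o) x := by rw [enumOrd_range hgn.strictMono]
    · have hmem : Veb f o x ∈ S := by
        rw [hVl]
        have h := mem_range_self (f := enumOrd S) x
        rwa [range_enumOrd hSunbdd] at h
      rw [Set.mem_iInter₂] at hmem
      exact hmem η hη

end VebSection

section HypSection

theorem sub_opow_log_lt' {ξ : Ordinal.{v}} (h : ξ ≠ 0) : ξ - omega0 ^ log omega0 ξ < ξ := by
  set e := log omega0 ξ
  have h1 : omega0 ^ e ≤ ξ := opow_log_le_self _ h
  by_contra hc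
  push_neg at hc
  have heq : ξ - omega0 ^ e = ξ := le_antisymm (Ordinal.sub_le_self _ _) hc
  have hadd : omega0 ^ e + ξ = ξ := by
    conv_lhs => rw [← heq]
    rw [Ordinal.add_sub_cancel_of_le h1]
  have hmul : ∀ n : ℕ, omega0 ^ e * n + ξ = ξ := by
    intro n
    induction n with
    | zero => simp
    | succ n IH =>
      push_cast
      rw [mul_add, mul_one, add_assoc, hadd, IH]
  have hle : omega0 ^ e * omega0 ≤ ξ := by
    rw [mul_le_iff_of_isSuccLimit isSuccLimit_omega0]
    intro b hb
    obtain ⟨n, rfl⟩ := lt_omega0.1 hb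
    calc omega0 ^ e * n ≤ omega0 ^ e * n + ξ := le_self_add
    _ = ξ := hmul n
  rw [← opow_succ] at hle
  exact (lt_opow_succ_log_self one_lt_omega0 ξ).not_ge hle

/-- The candidate minimal weak hyperation, built from the Veblen progression via
base-`ω` expansions. -/
noncomputable def Hyp (f : Ordinal.{u} → Ordinal.{u}) (ξ : Ordinal.{v}) :
    Ordinal.{u} → Ordinal.{u} :=
  if h : ξ = 0 then id
  else Veb f (log omega0 ξ) ∘ Hyp f (ξ - omega0 ^ log omega0 ξ)
termination_by ξ
decreasing_by exact sub_opow_log_lt' h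

theorem Hyp_zero (f : Ordinal.{u} → Ordinal.{u}) : Hyp f (0 : Ordinal.{v}) = id := by
  rw [Hyp]; simp

theorem Hyp_opow (f : Ordinal.{u} → Ordinal.{u}) (α : Ordinal.{v}) :
    Hyp f (omega0 ^ α) = Veb f α := by
  have h0 : omega0 ^ α ≠ 0 := (opow_pos α omega0_pos).ne'
  rw [Hyp, dif_neg h0, log_opow one_lt_omega0, Ordinal.sub_self, Hyp_zero, Function.comp_id]

theorem Hyp_one (f : Ordinal.{u} → Ordinal.{u}) : Hyp f (1 : Ordinal.{v}) = f := by
  have := Hyp_opow f (0 : Ordinal.{v})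
  rwa [opow_zero, Veb_zero] at this

variable {f : Ordinal.{u} → Ordinal.{u}} (hf : Order.IsNormal f)
  {F : Ordinal.{v} → Ordinal.{u} → Ordinal.{u}} (hW : WeakHyperation f F)
include hf hW

theorem Hyp_isNormal (ξ : Ordinal.{v}) : Order.IsNormal (Hyp f ξ) := by
  induction ξ using Ordinal.induction with
  | h ξ IH =>
    rw [Hyp]
    split
    · exact Order.IsNormal.id
    · next h0 =>
      exact ((Veb_main hf hW _).1).comp (IH _ (sub_opow_log_lt' h0))

theorem Hyp_absorb {e : Ordinal.{v}} :
    ∀ ξ, ξ < omega0 ^ e → ∀ x, Hyp f ξ (Veb f e x) = Veb f e x := by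
  intro ξ
  induction ξ using Ordinal.induction with
  | h ξ IH =>
    intro hlt x
    rw [Hyp]
    split
    · rfl
    · next h0 =>
      have hlog : log omega0 ξ < e := (lt_opow_iff_log_lt one_lt_omega0 h0).1 hlt
      rw [Function.comp_apply,
        IH _ (sub_opow_log_lt' h0) ((sub_opow_log_lt' h0).trans hlt) x,
        (Veb_main hf hW e).2.2 _ hlog x]

theorem Hyp_add : ∀ ξ ζ : Ordinal.{v}, Hyp f (ξ + ζ) = Hyp f ξ ∘ Hyp f ζ := by
  intro ξ
  induction ξ using Ordinal.induction with
  | h ξ IH =>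
    intro ζ
    rcases eq_or_ne ξ 0 with rfl | hξ0
    · rw [zero_add, Hyp_zero, Function.id_comp]
    rcases eq_or_ne ζ 0 with rfl | hζ0
    · rw [add_zero, Hyp_zero, Function.comp_id]
    rcases le_or_gt (log omega0 ζ) (log omega0 ξ) with hle | hlt
    · -- the leading exponent of `ξ` dominates
      have hsub : omega0 ^ log omega0 ξ ≤ ξ := opow_log_le_self _ hξ0
      have hξdec : omega0 ^ log omega0 ξ + (ξ - omega0 ^ log omega0 ξ) = ξ :=
        Ordinal.add_sub_cancel_of_le hsub
      have hdec : ξ + ζ = omega0 ^ log omega0 ξ + ((ξ - omega0 ^ log omega0 ξ) + ζ) := by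
        rw [← add_assoc, hξdec]
      have hρlt : (ξ - omega0 ^ log omega0 ξ) + ζ < omega0 ^ Order.succ (log omega0 ξ) := by
        apply principal_add_omega0_opow _
        · exact lt_of_le_of_lt (Ordinal.sub_le_self _ _)
            (lt_opow_succ_log_self one_lt_omega0 ξ)
        · exact (lt_opow_succ_log_self one_lt_omega0 ζ).trans_le
            (opow_le_opow_right omega0_pos (Order.succ_le_succ hle))
      have hne : ξ + ζ ≠ 0 := by
        have : 0 < ξ + ζ :=
          lt_of_lt_of_le (pos_iff_ne_zero.2 hξ0) (le_self_add)
        exact this.ne'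
      have hlog : log omega0 (ξ + ζ) = log omega0 ξ := by
        apply le_antisymm
        · rw [← Order.lt_succ_iff, ← lt_opow_iff_log_lt one_lt_omega0 hne, hdec]
          exact principal_add_omega0_opow _
            ((opow_lt_opow_iff_right one_lt_omega0).2 (Order.lt_succ _)) hρlt
        · rw [← opow_le_iff_le_log one_lt_omega0 hne]
          exact hsub.trans (le_self_add)
      rw [Hyp, dif_neg hne, hlog]
      rw [show ξ + ζ - omega0 ^ log omega0 ξ = (ξ - omega0 ^ log omega0 ξ) + ζ by
        rw [hdec, Ordinal.add_sub_cancel]]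
      rw [IH _ (sub_opow_log_lt' hξ0)]
      conv_rhs => rw [Hyp, dif_neg hξ0]
      rfl
    · -- `ζ` absorbs `ξ`
      have hζsub : omega0 ^ log omega0 ζ ≤ ζ := opow_log_le_self _ hζ0
      have hξlt : ξ < omega0 ^ log omega0 ζ :=
        (lt_opow_succ_log_self one_lt_omega0 ξ).trans_le
          (opow_le_opow_right omega0_pos (Order.succ_le_of_lt hlt))
      rw [add_absorp hξlt hζsub]
      funext x
      have hζx : Hyp f ζ x =
          Veb f (log omega0 ζ) (Hyp f (ζ - omega0 ^ log omega0 ζ) x) := by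
        rw [Hyp, dif_neg hζ0]; rfl
      rw [Function.comp_apply, hζx, Hyp_absorb hf hW ξ hξlt]

theorem Hyp_weakHyperation :
    WeakHyperation f (Hyp f : Ordinal.{v} → Ordinal.{u} → Ordinal.{u}) :=
  ⟨Hyp_isNormal hf hW, Hyp_zero f, Hyp_one f, Hyp_add hf hW⟩

/-- `Hyp f` is pointwise below `F`. -/
theorem Hyp_le : ∀ (ξ : Ordinal.{v}) (x : Ordinal.{u}), Hyp f ξ x ≤ F ξ x := by
  intro ξ
  induction ξ using Ordinal.induction with
  | h ξ IH =>
    intro x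
    rcases eq_or_ne ξ 0 with rfl | hξ0
    · rw [Hyp_zero, hW.2.1]
    have hdec : omega0 ^ log omega0 ξ + (ξ - omega0 ^ log omega0 ξ) = ξ :=
      Ordinal.add_sub_cancel_of_le (opow_log_le_self _ hξ0)
    have hgdec : F ξ x =
        F (omega0 ^ log omega0 ξ) (F (ξ - omega0 ^ log omega0 ξ) x) := by
      conv_lhs => rw [← hdec]
      exact congrFun (hW.2.2.2 _ _) x
    rw [Hyp, dif_neg hξ0, hgdec]
    calc Veb f (log omega0 ξ) (Hyp f (ξ - omega0 ^ log omega0 ξ) x)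
        ≤ Veb f (log omega0 ξ) (F (ξ - omega0 ^ log omega0 ξ) x) :=
          ((Veb_main hf hW _).1.strictMono.monotone
            (IH _ (sub_opow_log_lt' hξ0) x))
      _ ≤ F (omega0 ^ log omega0 ξ) (F (ξ - omega0 ^ log omega0 ξ) x) :=
          (Veb_main hf hW _).2.1 _

end HypSection

theorem hyperation_limit_veblen (f : Ordinal → Ordinal) (hf : Order.IsNormal f)
    (F : Ordinal → Ordinal → Ordinal) (hF : IsHyperation f F) :
    ∀ l : Ordinal, Order.IsSuccLimit l →
      Set.range (F (Ordinal.omega0 ^ l)) =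
        ⋂ α ∈ Set.Iio l, Set.range (F (Ordinal.omega0 ^ α)) := by
  intro l hl
  obtain ⟨hW, hmin⟩ := hF
  -- `F` coincides with the explicit construction `Hyp f`
  have hFH : ∀ ξ, F ξ = Hyp f ξ := fun ξ =>
    funext fun x =>
      le_antisymm (hmin _ (Hyp_weakHyperation hf hW) ξ x) (Hyp_le hf hW ξ x)
  have hmain := Veb_main hf hW
  -- the unbounded set of common fixed points below `l`
  have hsub : Set.range (F (omega0 ^ l)) ⊆
      ⋂ (β) (_ : β < l), Function.fixedPoints (Veb f β) :=
    range_subset_fixedPoints hW fun β hβ => ⟨(hmain β).1, (hmain β).2.1⟩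
  have hSunbdd : ¬ BddAbove (⋂ (β) (_ : β < l), Function.fixedPoints (Veb f β)) :=
    fun h => (hW.1 (omega0 ^ l)).strictMono.not_bddAbove_range_of_wellFoundedLT
      (h.mono hsub)
  have key : Set.range (Veb f l) = ⋂ α ∈ Set.Iio l, Set.range (Veb f α) := by
    ext x
    simp only [Set.mem_iInter, Set.mem_range, Set.mem_Iio]
    constructor
    · rintro ⟨y, rfl⟩ α hα
      exact ⟨Veb f l y, (hmain l).2.2 α hα y⟩
    · intro hx
      have hfp : x ∈ ⋂ (β) (_ : β < l), Function.fixedPoints (Veb f β) := by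
        refine Set.mem_iInter₂.2 fun β hβ => ?_
        obtain ⟨y, hy⟩ := hx (Order.succ β) (hl.succ_lt hβ)
        rw [← hy]
        exact (hmain (Order.succ β)).2.2 β (Order.lt_succ β) y
      rw [Veb_limit f hl]
      have h := range_enumOrd hSunbdd
      rw [← h] at hfp
      exact hfp
  simp only [hFH, Hyp_opow]
  exact key
end

section
/- Let f be a normal function with hyperation F, and let g be any weak hyperation of f such that g (ω^α) = F (ω^α) for every ordinal α. Then g = F, i.e., g ξ = F ξ for every ordinal ξ. (In the paper's formulation: a weak hyperation of f whose ω^α-th members coincide with the Veblen progression of f is the hyperation of f.) -/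
open Ordinal

theorem veblen_determines_hyperation (f : Ordinal → Ordinal) (hf : Order.IsNormal f)
    (F : Ordinal → Ordinal → Ordinal) (hF : IsHyperation f F)
    (g : Ordinal → Ordinal → Ordinal) (hg : WeakHyperation f g)
    (hveb : ∀ α : Ordinal, g (Ordinal.omega0 ^ α) = F (Ordinal.omega0 ^ α)) :
    ∀ ξ : Ordinal, g ξ = F ξ := by
  obtain ⟨hgN, hg0, hg1, hgadd⟩ := hg
  obtain ⟨⟨hFN, hF0, hF1, hFadd⟩, -⟩ := hF
  intro ξ
  induction ξ using Ordinal.induction with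
  | h ξ IH =>
    rcases eq_or_ne ξ 0 with rfl | hne
    · rw [hg0, hF0]
    · set e := Ordinal.log Ordinal.omega0 ξ with he
      have hωe : Ordinal.omega0 ^ e ≤ ξ := Ordinal.opow_log_le_self _ hne
      have hpos : 0 < Ordinal.omega0 ^ e := Ordinal.opow_pos _ Ordinal.omega0_pos
      have hdecomp : Ordinal.omega0 ^ e + (ξ - Ordinal.omega0 ^ e) = ξ :=
        Ordinal.add_sub_cancel_of_le hωe
      have hlt : ξ - Ordinal.omega0 ^ e < ξ := by
        rw [Ordinal.sub_lt_of_le hωe]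
        by_contra h
        push_neg at h
        have heq : Ordinal.omega0 ^ e + ξ = ξ := le_antisymm h le_add_self
        have hn : ∀ n : ℕ, Ordinal.omega0 ^ e * n + ξ = ξ := by
          intro n
          induction n with
          | zero => simp
          | succ n ih =>
            rw [Nat.cast_succ, mul_add, mul_one, add_assoc, heq, ih]
        have hle : Ordinal.omega0 ^ e * Ordinal.omega0 ≤ ξ := by
          rw [Ordinal.mul_le_iff_of_isSuccLimit Ordinal.isSuccLimit_omega0]
          intro b hb
          obtain ⟨n, rfl⟩ := Ordinal.lt_omega0.1 hb
          exact (hn n) ▸ le_self_add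
        have hlt2 := Ordinal.lt_opow_succ_log_self Ordinal.one_lt_omega0 ξ
        rw [Ordinal.opow_succ] at hlt2
        exact hlt2.not_ge hle
      calc g ξ = g (Ordinal.omega0 ^ e + (ξ - Ordinal.omega0 ^ e)) := by rw [hdecomp]
        _ = g (Ordinal.omega0 ^ e) ∘ g (ξ - Ordinal.omega0 ^ e) := hgadd _ _
        _ = F (Ordinal.omega0 ^ e) ∘ F (ξ - Ordinal.omega0 ^ e) := by
            rw [hveb, IH _ hlt]
        _ = F ξ := by rw [← hFadd, hdecomp]
end

section
/- Let g be a weak cohyperation of an initial function f. Then: (1) if ξ < ζ then g ζ α ≤ g ξ α for every ordinal α; (2) if ξ + ζ = ζ then g ζ α = g ζ (g ξ α) for every ordinal α. -/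
open Ordinal

theorem weakCohyperation_properties (f : Ordinal → Ordinal) (hf : Initial f)
    (g : Ordinal → Ordinal → Ordinal) (hg : WeakCohyperation f g) :
    (∀ ξ ζ α : Ordinal, ξ < ζ → g ζ α ≤ g ξ α) ∧
    (∀ ξ ζ α : Ordinal, ξ + ζ = ζ → g ζ α = g ζ (g ξ α)) := by
  obtain ⟨hinit, h0, h1, hadd⟩ := hg
  have key : ∀ ξ α : Ordinal, g ξ α ≤ α := by
    intro ξ α
    induction α using Ordinal.induction with
    | h α IH =>
      by_contra h
      push_neg at h
      obtain ⟨γ, hγ⟩ := hinit ξ (α + 1)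
      have hgα : g ξ α < γ := by
        have : g ξ α ∈ {x | x < γ} := by
          rw [← hγ]
          exact ⟨α, by simp, rfl⟩
        exact this
      have hα : α ∈ {x : Ordinal | x < γ} := lt_trans h hgα
      rw [← hγ] at hα
      obtain ⟨x, hx, hgx⟩ := hα
      simp only [Ordinal.add_one_eq_succ, Set.mem_setOf_eq, Order.lt_succ_iff] at hx
      rcases lt_or_eq_of_le hx with h2 | h2
      · exact absurd hgx (lt_of_le_of_lt (IH x h2) h2).ne
      · exact h.ne' (h2 ▸ hgx)
  constructor
  · intro ξ ζ α hlt
    have hsub := Ordinal.add_sub_cancel_of_le hlt.le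
    calc g ζ α = g (ξ + (ζ - ξ)) α := by rw [hsub]
      _ = g (ζ - ξ) (g ξ α) := by rw [hadd]; rfl
      _ ≤ g ξ α := key _ _
  · intro ξ ζ α hξζ
    have := congrFun (hadd ξ ζ) α
    rw [hξζ] at this
    exact this
end

section
/- Let f be an initial function with cohyperation G, let ξ be an ordinal, and let H be the cohyperation of the initial function G ξ. Then for every ordinal ζ, H ζ = G (ξ * ζ), where ξ * ζ is ordinal multiplication. -/
open Ordinal

lemma Initial.le_self {i : Ordinal → Ordinal} (hi : Initial i) : ∀ α, i α ≤ α := by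
  intro α
  induction α using Ordinal.induction with
  | h α IH =>
    obtain ⟨γ, hγ⟩ := hi (α + 1)
    by_contra hcon
    push_neg at hcon
    have hiα : i α ∈ {x | x < γ} := by
      rw [← hγ]
      exact ⟨α, lt_add_one α, rfl⟩
    have hα : α ∈ {x | x < γ} := lt_trans hcon hiα
    rw [← hγ] at hα
    obtain ⟨β, hβ, hβ2⟩ := hα
    simp only [Set.mem_setOf_eq, Ordinal.add_one_eq_succ, Order.lt_succ_iff] at hβ
    rcases lt_or_eq_of_le hβ with h | h
    · have : i β ≤ β := IH β h
      exact absurd (hβ2 ▸ this) (not_le_of_gt h)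
    · rw [h] at hβ2
      exact lt_irrefl α (by rwa [hβ2] at hcon)

lemma Initial.comp {i j : Ordinal → Ordinal} (hi : Initial i) (hj : Initial j) :
    Initial (fun α => j (i α)) := by
  intro β
  obtain ⟨γ₁, h₁⟩ := hi β
  obtain ⟨γ₂, h₂⟩ := hj γ₁
  exact ⟨γ₂, by rw [← Set.image_image j i, h₁, h₂]⟩

lemma WeakCohyperation.le_self' {f : Ordinal → Ordinal} {g : Ordinal → Ordinal → Ordinal}
    (hg : WeakCohyperation f g) (η α : Ordinal) : g η α ≤ α :=
  (hg.1 η).le_self α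

lemma WeakCohyperation.comp_apply {f : Ordinal → Ordinal} {g : Ordinal → Ordinal → Ordinal}
    (hg : WeakCohyperation f g) (x y α : Ordinal) : g (x + y) α = g y (g x α) := by
  rw [hg.2.2.2 x y]; rfl

lemma WeakCohyperation.anti {f : Ordinal → Ordinal} {g : Ordinal → Ordinal → Ordinal}
    (hg : WeakCohyperation f g) {c c' : Ordinal} (h : c ≤ c') (α : Ordinal) :
    g c' α ≤ g c α := by
  have hcc : c + (c' - c) = c' := Ordinal.add_sub_cancel_of_le h
  rw [← hcc, hg.comp_apply]
  exact hg.le_self' _ _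

theorem cohyperation_of_cohyperate (f : Ordinal → Ordinal) (hf : Initial f)
    (G : Ordinal → Ordinal → Ordinal) (hG : IsCohyperation f G)
    (ξ : Ordinal) (H : Ordinal → Ordinal → Ordinal) (hH : IsCohyperation (G ξ) H) :
    ∀ ζ : Ordinal, H ζ = G (ξ * ζ) := by
  obtain ⟨hGw, hGmax⟩ := hG
  obtain ⟨hHw, hHmax⟩ := hH
  intro ζ
  rcases eq_or_ne ξ 0 with rfl | hξ0
  · -- trivial case ξ = 0
    have hid : WeakCohyperation (G 0) (fun _ => id) :=
      ⟨fun _ => fun β => ⟨β, by simp⟩, rfl, hGw.2.1.symm, fun _ _ => rfl⟩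
    funext α
    apply le_antisymm
    · rw [zero_mul, hGw.2.1]
      exact hHw.le_self' ζ α
    · rw [zero_mul, hGw.2.1]
      exact hHmax _ hid ζ α
  -- main case
  have hMul : WeakCohyperation (G ξ) (fun ζ => G (ξ * ζ)) := by
    refine ⟨fun ζ => hGw.1 _, ?_, ?_, ?_⟩
    · show G (ξ * 0) = id
      rw [mul_zero]; exact hGw.2.1
    · show G (ξ * 1) = G ξ
      rw [mul_one]
    · intro x y
      show G (ξ * (x + y)) = G (ξ * y) ∘ G (ξ * x)
      rw [mul_add]; exact hGw.2.2.2 _ _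
  have hA : ∀ ζ α, G (ξ * ζ) α ≤ H ζ α := fun ζ α => hHmax _ hMul ζ α
  induction ζ using Ordinal.induction with
  | h ζ IH =>
  rcases eq_or_ne ζ 0 with rfl | hζ0
  · rw [mul_zero, hGw.2.1, hHw.2.1]
  by_cases hdec : ∃ x < ζ, ∃ y < ζ, x + y = ζ
  · obtain ⟨x, hx, y, hy, rfl⟩ := hdec
    rw [hHw.2.2.2 x y, IH x hx, IH y hy, mul_add, hGw.2.2.2]
  -- ζ is additively indecomposable
  push_neg at hdec
  have hprinc : Principal (· + ·) ζ := by
    intro x y hx hy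
    by_contra hcon
    push_neg at hcon
    have h1 : x + (ζ - x) = ζ := Ordinal.add_sub_cancel_of_le hx.le
    have h2 : ζ - x ≤ y := by rw [Ordinal.sub_le]; exact hcon
    exact hdec x hx (ζ - x) (h2.trans_lt hy) h1
  obtain hz | hmem := principal_add_iff_zero_or_omega0_opow.1 hprinc
  · exact absurd hz hζ0
  obtain ⟨a, ha⟩ := hmem
  have ha' : ζ = ω ^ a := ha.symm
  subst ha'
  rcases eq_or_ne a 0 with rfl | ha0
  · rw [opow_zero, mul_one]
    exact hHw.2.2.1
  -- ζ = ω ^ a with a ≥ 1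
  have hω : (ω : Ordinal) ≤ ω ^ a := by
    calc (ω : Ordinal) = ω ^ (1 : Ordinal) := (opow_one _).symm
      _ ≤ ω ^ a := opow_le_opow_right omega0_pos (Ordinal.one_le_iff_ne_zero.2 ha0)
  set ϖ := ξ * ω ^ a with hϖdef
  have hϖ0 : ϖ ≠ 0 := _root_.mul_ne_zero hξ0 (opow_ne_zero a omega0_ne_zero)
  have hϖprinc : Principal (· + ·) ϖ := by
    intro x y hx hy
    have hx1 : x < ξ * (x / ξ + 1) := by
      rw [mul_add, mul_one]; exact lt_mul_div_add x hξ0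
    have hy1 : y < ξ * (y / ξ + 1) := by
      rw [mul_add, mul_one]; exact lt_mul_div_add y hξ0
    have hone : (1 : Ordinal) < ω ^ a := lt_of_lt_of_le one_lt_omega0 hω
    have hdx : x / ξ + 1 < ω ^ a := hprinc ((Ordinal.div_lt hξ0).2 hx) hone
    have hdy : y / ξ + 1 < ω ^ a := hprinc ((Ordinal.div_lt hξ0).2 hy) hone
    calc x + y < x + ξ * (y / ξ + 1) := add_lt_add_right hy1 x
      _ ≤ ξ * (x / ξ + 1) + ξ * (y / ξ + 1) := add_le_add_left hx1.le _
      _ = ξ * ((x / ξ + 1) + (y / ξ + 1)) := (mul_add _ _ _).symm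
      _ ≤ ξ * ω ^ a := mul_le_mul_right (hprinc hdx hdy).le _
  obtain ⟨b, hb⟩ : ∃ b : Ordinal, ϖ = ω ^ b := by
    obtain ⟨b, hb⟩ := (principal_add_iff_zero_or_omega0_opow.1 hϖprinc).resolve_left hϖ0
    exact ⟨b, hb.symm⟩
  have habsorb : ∀ t, t < ϖ → ∀ c, ϖ ≤ c → t + c = c := by
    intro t ht c hc
    rw [hb] at ht hc
    exact Ordinal.add_absorp ht hc
  have habsorb2 : ∀ t, t < ω ^ a → ∀ c, ω ^ a ≤ c → t + c = c :=
    fun t ht c hc => Ordinal.add_absorp ht hc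
  have hle_mul : ∀ q' : Ordinal, q' ≠ 0 → ∀ z : Ordinal, z ≤ z * q' := by
    intro q' hq' z
    conv_lhs => rw [← mul_one z]
    exact mul_le_mul_right (Ordinal.one_le_iff_ne_zero.2 hq') z
  -- key absorption lemma
  have key : ∀ q' : Ordinal, q' ≠ 0 → ∀ ρ < ϖ, ∀ x,
      H (ω ^ a * q') (G ρ x) = H (ω ^ a * q') x := by
    intro q' hq' ρ hρ x
    have hμ : (ω : Ordinal) ^ a ≤ ω ^ a * q' := hle_mul q' hq' _
    have hstep1 : ∀ δ, δ < ω ^ a → ∀ y,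
        H (ω ^ a * q') (G (ξ * δ) y) = H (ω ^ a * q') y := by
      intro δ hδ y
      rw [← IH δ hδ, ← hHw.comp_apply δ (ω ^ a * q') y, habsorb2 δ hδ _ hμ]
    have hstep2 : ∀ y, H (ω ^ a * q') (G (ρ % ξ) y) = H (ω ^ a * q') y := by
      intro y
      set r := ρ % ξ with hrdef
      have hrξ : r ≤ ξ := (mod_lt ρ hξ0).le
      have hfin : ∀ k : ℕ, ∀ z, H (ω ^ a * q') (G (ξ * k) z) = H (ω ^ a * q') z :=
        fun k z => hstep1 k ((nat_lt_omega0 k).trans_le hω) z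
      set u : ℕ → Ordinal := fun k => G (ξ * k) y with hu
      set w : ℕ → Ordinal := fun k => G (ξ * k) (G r y) with hwdef
      have hwy : ∀ k : ℕ, w k = G (r + ξ * k) y := fun k => (hGw.comp_apply r (ξ * k) y).symm
      have hwu : ∀ k : ℕ, w k ≤ u k := by
        intro k
        rw [hwy k]
        exact hGw.anti (le_add_self) y
      have huw : ∀ k : ℕ, u (k + 1) ≤ w k := by
        intro k
        rw [hwy k]
        apply hGw.anti ?_ y
        calc r + ξ * k ≤ ξ + ξ * k := add_le_add_left hrξ _
          _ = ξ * (1 + (k : Ordinal)) := by rw [mul_add, mul_one]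
          _ = ξ * ((k + 1 : ℕ) : Ordinal) := by
              rw [Ordinal.one_add_natCast]
              norm_cast
      obtain ⟨m, hm⟩ : ∃ m : ℕ, ∀ k : ℕ, u m ≤ u k := by
        obtain ⟨o, ho, hmin⟩ := Ordinal.lt_wf.has_min (Set.range u) (Set.range_nonempty u)
        obtain ⟨m, rfl⟩ := ho
        exact ⟨m, fun k => not_lt.1 (hmin (u k) (Set.mem_range_self k))⟩
      have heq : u (m + 1) = w m :=
        le_antisymm (huw m) ((hwu m).trans (hm (m + 1)))
      have h1 : H (ω ^ a * q') (w m) = H (ω ^ a * q') (G r y) := hfin m (G r y)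
      have h2 : H (ω ^ a * q') (u (m + 1)) = H (ω ^ a * q') y := hfin (m + 1) y
      rw [← h1, ← heq, h2]
    calc H (ω ^ a * q') (G ρ x)
        = H (ω ^ a * q') (G (ρ % ξ) (G (ξ * (ρ / ξ)) x)) := by
          rw [← hGw.comp_apply (ξ * (ρ / ξ)) (ρ % ξ) x, Ordinal.div_add_mod]
      _ = H (ω ^ a * q') (G (ξ * (ρ / ξ)) x) := hstep2 _
      _ = H (ω ^ a * q') x := hstep1 (ρ / ξ) ((Ordinal.div_lt hξ0).2 hρ) x
  -- the competitor weak cohyperation of f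
  set K : Ordinal → Ordinal → Ordinal :=
    fun η x => G (η % ϖ) (H (ω ^ a * (η / ϖ)) x) with hKdef
  have hdm : ∀ c t, t < ϖ → (ϖ * c + t) / ϖ = c ∧ (ϖ * c + t) % ϖ = t := by
    intro c t ht
    have htϖ : t / ϖ = 0 := by
      rw [← Ordinal.lt_one_iff_zero, Ordinal.div_lt hϖ0, mul_one]
      exact ht
    have hdiv : (ϖ * c + t) / ϖ = c := by
      rw [mul_add_div c hϖ0 t, htϖ, add_zero]
    refine ⟨hdiv, ?_⟩
    have hdam := Ordinal.div_add_mod (ϖ * c + t) ϖ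
    rw [hdiv] at hdam
    exact add_left_cancel hdam
  have hKw : WeakCohyperation f K := by
    refine ⟨fun η => Initial.comp (hHw.1 _) (hGw.1 _), ?_, ?_, ?_⟩
    · funext x
      show G (0 % ϖ) (H (ω ^ a * (0 / ϖ)) x) = id x
      rw [Ordinal.zero_mod, Ordinal.zero_div, mul_zero, hHw.2.1, hGw.2.1]
      rfl
    · have h1ϖ : (1 : Ordinal) < ϖ := by
        calc (1 : Ordinal) < ω := one_lt_omega0
          _ ≤ ω ^ a := hω
          _ = 1 * ω ^ a := (one_mul _).symm
          _ ≤ ξ * ω ^ a := mul_le_mul_left (Ordinal.one_le_iff_ne_zero.2 hξ0) _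
      have hd := hdm 0 1 h1ϖ
      rw [mul_zero, zero_add] at hd
      funext x
      show G (1 % ϖ) (H (ω ^ a * (1 / ϖ)) x) = f x
      rw [hd.1, hd.2, mul_zero, hHw.2.1, hGw.2.2.1]
      rfl
    · intro η η'
      funext x
      have hη : ϖ * (η / ϖ) + η % ϖ = η := Ordinal.div_add_mod η ϖ
      have hρ : η % ϖ < ϖ := mod_lt η hϖ0
      have hη' : ϖ * (η' / ϖ) + η' % ϖ = η' := Ordinal.div_add_mod η' ϖ
      have hρ' : η' % ϖ < ϖ := mod_lt η' hϖ0
      show G ((η + η') % ϖ) (H (ω ^ a * ((η + η') / ϖ)) x)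
          = G (η' % ϖ) (H (ω ^ a * (η' / ϖ)) (G (η % ϖ) (H (ω ^ a * (η / ϖ)) x)))
      rcases eq_or_ne (η' / ϖ) 0 with hq'0 | hq'0
      · have hsum : η + η' = ϖ * (η / ϖ) + (η % ϖ + η' % ϖ) := by
          nth_rewrite 1 [← hη, ← hη']
          rw [hq'0, mul_zero, zero_add, add_assoc]
        have hd := hdm (η / ϖ) (η % ϖ + η' % ϖ) (hϖprinc hρ hρ')
        rw [hsum, hd.1, hd.2, hq'0, mul_zero, hHw.2.1]
        show G (η % ϖ + η' % ϖ) (H (ω ^ a * (η / ϖ)) x)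
            = G (η' % ϖ) (id (G (η % ϖ) (H (ω ^ a * (η / ϖ)) x)))
        rw [hGw.comp_apply]
        rfl
      · have habs : η % ϖ + ϖ * (η' / ϖ) = ϖ * (η' / ϖ) :=
          habsorb _ hρ _ (hle_mul _ hq'0 ϖ)
        have hsum : η + η' = ϖ * (η / ϖ + η' / ϖ) + η' % ϖ := by
          nth_rewrite 1 [← hη, ← hη']
          rw [mul_add, add_assoc (ϖ * (η / ϖ)) (η % ϖ), ← add_assoc (η % ϖ), habs,
            ← add_assoc]
        have hd := hdm (η / ϖ + η' / ϖ) (η' % ϖ) hρ'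
        rw [hsum, hd.1, hd.2, mul_add, hHw.comp_apply,
          key (η' / ϖ) hq'0 (η % ϖ) hρ (H (ω ^ a * (η / ϖ)) x)]
  -- conclude by maximality of G
  funext α
  apply le_antisymm
  · have hmax := hGmax K hKw ϖ α
    have hKϖ : K ϖ α = H (ω ^ a) α := by
      show G (ϖ % ϖ) (H (ω ^ a * (ϖ / ϖ)) α) = H (ω ^ a) α
      rw [Ordinal.mod_self, Ordinal.div_self hϖ0, mul_one, hGw.2.1]
      rfl
    rw [hKϖ] at hmax
    exact hmax
  · exact hA (ω ^ a) α
end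

section
/- Let g be an initial function with cohyperation G, and let f : Ordinal → Ordinal be any function. Then the following are equivalent: (1) f (ξ + ζ) = G ζ (f ξ) for all ordinals ξ, ζ (f is g-exact); (2) f ξ = G ξ (f 0) for every ordinal ξ; (3) for every ordinal ζ > 0 there exists ξ < ζ such that f ζ = G (ζ - ξ) (f ξ), where ζ - ξ denotes the unique ordinal η with ξ + η = ζ. -/
open Ordinal

theorem exact_tfae (g : Ordinal → Ordinal) (hg : Initial g)
    (G : Ordinal → Ordinal → Ordinal) (hG : IsCohyperation g G)
    (f : Ordinal → Ordinal) :
    ((∀ ξ ζ : Ordinal, f (ξ + ζ) = G ζ (f ξ)) ↔ (∀ ξ : Ordinal, f ξ = G ξ (f 0))) ∧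
    ((∀ ξ : Ordinal, f ξ = G ξ (f 0)) ↔
      (∀ ζ : Ordinal, 0 < ζ → ∃ ξ : Ordinal, ξ < ζ ∧ f ζ = G (ζ - ξ) (f ξ))) := by
  obtain ⟨⟨_, h0, _, hadd⟩, _⟩ := hG
  constructor
  · constructor
    · intro h ξ
      have := h 0 ξ
      rwa [zero_add] at this
    · intro h ξ ζ
      rw [h (ξ + ζ), h ξ, hadd, Function.comp_apply]
  · constructor
    · intro h ζ hζ
      exact ⟨0, hζ, by rw [Ordinal.sub_zero, h ζ, h 0, h0, id]⟩
    · intro h ζ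
      induction ζ using Ordinal.induction with
      | h ζ IH =>
        rcases eq_or_lt_of_le (zero_le (a := ζ)) with hz | hz
        · rw [← hz, h0, id]
        · obtain ⟨ξ, hξζ, hfe⟩ := h ζ hz
          rw [hfe, IH ξ hξζ, ← Function.comp_apply (f := G (ζ - ξ)), ← hadd,
            Ordinal.add_sub_cancel_of_le hξζ.le]
end

section
/- Let f be a normal function with hyperation F, let g be a left adjoint of f, and let G be the cohyperation of g. Then for every ordinal ξ, G ξ is a left adjoint of F ξ; that is, for all ordinals α, β: α = F ξ β implies G ξ α = β, and α < F ξ β implies G ξ α < β. -/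
open Ordinal

namespace CLAH

universe u v

open Order Set

/-! ### Generalities on initial functions -/

theorem initial_comp {g₁ g₂ : Ordinal.{u} → Ordinal.{u}} (h₁ : Initial g₁) (h₂ : Initial g₂) :
    Initial (g₁ ∘ g₂) := by
  intro β
  obtain ⟨γ, hγ⟩ := h₂ β
  obtain ⟨γ', hγ'⟩ := h₁ γ
  exact ⟨γ', by rw [Set.image_comp, hγ, hγ']⟩

theorem initial_id : Initial (fun a : Ordinal.{u} => a) := by
  intro β; exact ⟨β, by ext x; simp⟩

theorem initial_zero : Initial (fun _ : Ordinal.{u} => 0) := by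
  intro β
  rcases eq_or_ne β 0 with rfl | hβ
  · exact ⟨0, by ext x; simp [not_lt_zero]⟩
  · refine ⟨1, ?_⟩
    ext x
    simp only [Set.mem_image, Set.mem_setOf_eq, lt_one_iff_zero]
    constructor
    · rintro ⟨a, _, rfl⟩; rfl
    · rintro rfl; exact ⟨0, pos_iff_ne_zero.2 hβ, rfl⟩

theorem initial_le {g : Ordinal.{u} → Ordinal.{u}} (hg : Initial g) (α : Ordinal) : g α ≤ α := by
  classical
  choose Γ hΓ using hg
  have mem_iff : ∀ β x, x < Γ β ↔ ∃ a < β, g a = x := by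
    intro β x
    rw [show (x < Γ β) = (x ∈ {α | α < Γ β}) from rfl, ← hΓ β]
    simp [Set.mem_image]
  have key : ∀ β, Γ β ≤ β := by
    intro β
    induction β using Ordinal.induction with
    | _ β IH =>
      by_contra h
      push_neg at h
      rcases Ordinal.zero_or_succ_or_isSuccLimit β with rfl | ⟨β', rfl⟩ | hl
      · obtain ⟨a, ha, -⟩ := (mem_iff 0 0).1 h
        exact not_lt_zero ha
      · have hIH := IH β' (lt_succ β')
        have h1 : Γ β' < Γ (succ β') := lt_of_le_of_lt (hIH.trans (le_succ β')) h
        have h2 : Γ β' + 1 < Γ (succ β') := by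
          have : Γ β' + 1 ≤ succ β' := by
            rw [add_one_eq_succ]; exact succ_le_succ hIH
          exact lt_of_le_of_lt this h
        obtain ⟨a1, ha1, hga1⟩ := (mem_iff (succ β') _).1 h1
        obtain ⟨a2, ha2, hga2⟩ := (mem_iff (succ β') _).1 h2
        have e1 : a1 = β' := by
          by_contra hne
          have hlt : a1 < β' := lt_of_le_of_ne (lt_succ_iff.1 ha1) hne
          have : g a1 < Γ β' := (mem_iff β' _).2 ⟨a1, hlt, rfl⟩
          rw [hga1] at this
          exact lt_irrefl _ this
        have e2 : a2 = β' := by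
          by_contra hne
          have hlt : a2 < β' := lt_of_le_of_ne (lt_succ_iff.1 ha2) hne
          have : g a2 < Γ β' := (mem_iff β' _).2 ⟨a2, hlt, rfl⟩
          rw [hga2] at this
          exact lt_irrefl _ (this.trans (lt_add_one _))
        rw [e1] at hga1; rw [e2] at hga2
        rw [hga1] at hga2
        exact absurd hga2 (lt_add_one (Γ β')).ne
      · obtain ⟨a, ha, hga⟩ := (mem_iff β β).1 h
        have h1 : g a < Γ (succ a) := (mem_iff (succ a) _).2 ⟨a, lt_succ a, rfl⟩
        have h2 : Γ (succ a) ≤ succ a := IH _ (hl.succ_lt ha)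
        have : g a < β := lt_of_lt_of_le h1 (h2.trans (hl.succ_lt ha).le)
        rw [hga] at this
        exact lt_irrefl _ this
  have h1 : g α < Γ (succ α) := (mem_iff (succ α) _).2 ⟨α, lt_succ α, rfl⟩
  exact lt_succ_iff.1 (lt_of_lt_of_le h1 (key (succ α)))

/-! ### Leading `ω`-power decompositions -/

theorem omega0_opow_add_sub (x : Ordinal.{u}) (hx : x ≠ 0) :
    ω ^ log ω x + (x - ω ^ log ω x) = x :=
  Ordinal.add_sub_cancel_of_le (opow_log_le_self ω hx)

theorem sub_opow_log_lt (x : Ordinal.{u}) (hx : x ≠ 0) : x - ω ^ log ω x < x := by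
  set s := log ω x with hs
  rcases lt_or_ge (x - ω ^ s) x with h | h
  · exact h
  exfalso
  have hyx : x - ω ^ s = x := le_antisymm (sub_le_self _ _) h
  have habs : ω ^ s + x = x := by
    conv_rhs => rw [← omega0_opow_add_sub x hx]
    rw [← hs, hyx]
  have hn : ∀ n : ℕ, ω ^ s * n + x = x := by
    intro n
    induction n with
    | zero => simp
    | succ n ih =>
      have e : ((n+1 : ℕ) : Ordinal) = (n : Ordinal) + 1 := by push_cast; ring
      rw [e, mul_add_one, add_assoc, habs, ih]
  have hω : ω ^ s * ω ≤ x := by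
    rw [mul_le_iff_of_isSuccLimit isSuccLimit_omega0]
    intro b' hb'
    obtain ⟨n, rfl⟩ := lt_omega0.1 hb'
    calc ω ^ s * n ≤ ω ^ s * n + x := le_self_add
      _ = x := hn n
  rw [← opow_succ] at hω
  exact (lt_opow_succ_log_self one_lt_omega0 x).not_ge hω

theorem log_omega0_eq {x s : Ordinal.{u}} (h1 : ω ^ s ≤ x) (h2 : x < ω ^ (s + 1)) :
    log ω x = s := by
  have hx : x ≠ 0 := by
    intro h; rw [h] at h1
    exact (opow_pos s omega0_pos).not_ge h1
  rw [log_eq_iff one_lt_omega0 hx]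
  exact ⟨h1, h2⟩

theorem isNormal_id : IsNormal (fun a : Ordinal.{u} => a) := by
  exact Order.IsNormal.id


/-! ### Generic CNF-style families built from exponent-indexed functions -/

section Hyper

variable (T : Ordinal.{v} → Ordinal.{u} → Ordinal.{u})

noncomputable def hyperOf (x : Ordinal.{v}) : Ordinal.{u} → Ordinal.{u} :=
  if h : x = 0 then fun a => a else T (log ω x) ∘ hyperOf (x - ω ^ log ω x)
termination_by x
decreasing_by exact sub_opow_log_lt x h

theorem hyperOf_zero : hyperOf T 0 = fun a => a := by rw [hyperOf]; simp

theorem hyperOf_ne {x : Ordinal.{v}} (h : x ≠ 0) :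
    hyperOf T x = T (log ω x) ∘ hyperOf T (x - ω ^ log ω x) := by
  conv_lhs => rw [hyperOf]
  simp [h]

theorem hyperOf_opow (s : Ordinal.{v}) : ∀ x, hyperOf T (ω ^ s) x = T s x := by
  intro x
  rw [hyperOf_ne T (opow_ne_zero s omega0_ne_zero), log_opow one_lt_omega0, sub_self,
    hyperOf_zero]
  rfl

theorem hyperOf_isNormal (hT : ∀ a, IsNormal (T a)) (x : Ordinal.{v}) :
    IsNormal (hyperOf T x) := by
  induction x using Ordinal.induction with
  | _ x IH =>
    rcases eq_or_ne x 0 with rfl | hx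
    · rw [hyperOf_zero]; exact isNormal_id
    · rw [hyperOf_ne T hx]
      exact (hT _).comp (IH _ (sub_opow_log_lt x hx))

variable {T} (Habs : ∀ a b, a < b → ∀ x, T a (T b x) = T b x)
include Habs

theorem hyperOf_absorb : ∀ ξ, ∀ {t}, ξ < ω ^ t → ∀ x, hyperOf T ξ (T t x) = T t x := by
  intro ξ
  induction ξ using Ordinal.induction with
  | _ ξ IH =>
    intro t hξ x
    rcases eq_or_ne ξ 0 with rfl | hx
    · rw [hyperOf_zero]
    · have hst : log ω ξ < t := (lt_opow_iff_log_lt one_lt_omega0 hx).1 hξ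
      rw [hyperOf_ne T hx]
      have hlt := sub_opow_log_lt ξ hx
      calc T (log ω ξ) (hyperOf T (ξ - ω ^ log ω ξ) (T t x))
          = T (log ω ξ) (T t x) := by rw [IH _ hlt ((hlt.trans hξ)) x]
        _ = T t x := Habs _ _ hst x

theorem hyperOf_add : ∀ ξ ζ, hyperOf T (ξ + ζ) = hyperOf T ξ ∘ hyperOf T ζ := by
  intro ξ
  induction ξ using Ordinal.induction with
  | _ ξ IH =>
    intro ζ
    rcases eq_or_ne ξ 0 with rfl | hξ
    · rw [zero_add, hyperOf_zero]; rfl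
    rcases eq_or_ne ζ 0 with rfl | hζ
    · rw [add_zero, hyperOf_zero]; rfl
    set s := log ω ξ with hs
    set t := log ω ζ with ht
    rcases lt_or_ge s t with hst | hts
    · have habs : ξ + ζ = ζ :=
        add_absorp ((lt_opow_iff_log_lt one_lt_omega0 hξ).2 hst) (opow_log_le_self ω hζ)
      rw [habs]
      funext x
      have : hyperOf T ζ x = T t (hyperOf T (ζ - ω ^ t) x) := by
        rw [hyperOf_ne T hζ]; rfl
      simp only [Function.comp_apply, this]
      rw [hyperOf_absorb Habs ξ ((lt_opow_iff_log_lt one_lt_omega0 hξ).2 hst)]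
    · have hξs : ω ^ s ≤ ξ := opow_log_le_self ω hξ
      have hadd : ξ + ζ = ω ^ s + ((ξ - ω ^ s) + ζ) := by
        rw [← add_assoc, omega0_opow_add_sub ξ hξ]
      have hlog : log ω (ξ + ζ) = s := by
        apply log_omega0_eq (hξs.trans (le_self_add : ξ ≤ ξ + ζ))
        apply principal_add_omega0_opow (s + 1)
        · rw [← succ_eq_add_one]; exact lt_opow_succ_log_self one_lt_omega0 ξ
        · calc ζ < ω ^ (t + 1) := by
                rw [← succ_eq_add_one]; exact lt_opow_succ_log_self one_lt_omega0 ζ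
            _ ≤ ω ^ (s + 1) := opow_le_opow_right omega0_pos (by simpa using hts)
      have hne : ξ + ζ ≠ 0 := fun h => hξ (nonpos_iff_eq_zero.1 (h ▸ (le_self_add : ξ ≤ ξ + ζ)))
      rw [hyperOf_ne T hne, hlog]
      have hsub : (ξ + ζ) - ω ^ s = (ξ - ω ^ s) + ζ := by
        rw [hadd, Ordinal.add_sub_cancel]
      rw [hsub, IH _ (sub_opow_log_lt ξ hξ), hyperOf_ne T hξ, ← hs]
      rfl

end Hyper

section Cohyp

variable (T : Ordinal.{v} → Ordinal.{u} → Ordinal.{u})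

noncomputable def cohypOf (x : Ordinal.{v}) : Ordinal.{u} → Ordinal.{u} :=
  if h : x = 0 then fun a => a else cohypOf (x - ω ^ log ω x) ∘ T (log ω x)
termination_by x
decreasing_by exact sub_opow_log_lt x h

theorem cohypOf_zero : cohypOf T 0 = fun a => a := by rw [cohypOf]; simp

theorem cohypOf_ne {x : Ordinal.{v}} (h : x ≠ 0) :
    cohypOf T x = cohypOf T (x - ω ^ log ω x) ∘ T (log ω x) := by
  conv_lhs => rw [cohypOf]
  simp [h]

theorem cohypOf_opow (s : Ordinal.{v}) : ∀ x, cohypOf T (ω ^ s) x = T s x := by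
  intro x
  rw [cohypOf_ne T (opow_ne_zero s omega0_ne_zero), log_opow one_lt_omega0, sub_self,
    cohypOf_zero]
  rfl

theorem cohypOf_initial (hT : ∀ a, Initial (T a)) (x : Ordinal.{v}) :
    Initial (cohypOf T x) := by
  induction x using Ordinal.induction with
  | _ x IH =>
    rcases eq_or_ne x 0 with rfl | hx
    · rw [cohypOf_zero]; exact initial_id
    · rw [cohypOf_ne T hx]
      exact initial_comp (IH _ (sub_opow_log_lt x hx)) (hT _)

variable {T} (Habs : ∀ a b, a < b → ∀ x, T b (T a x) = T b x)
include Habs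

theorem cohypOf_absorb : ∀ ξ, ∀ {t}, ξ < ω ^ t → ∀ x, T t (cohypOf T ξ x) = T t x := by
  intro ξ
  induction ξ using Ordinal.induction with
  | _ ξ IH =>
    intro t hξ x
    rcases eq_or_ne ξ 0 with rfl | hx
    · rw [cohypOf_zero]
    · have hst : log ω ξ < t := (lt_opow_iff_log_lt one_lt_omega0 hx).1 hξ
      rw [cohypOf_ne T hx]
      have hlt := sub_opow_log_lt ξ hx
      calc T t (cohypOf T (ξ - ω ^ log ω ξ) (T (log ω ξ) x))
          = T t (T (log ω ξ) x) := IH _ hlt (hlt.trans hξ) _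
        _ = T t x := Habs _ _ hst x

theorem cohypOf_add : ∀ ξ ζ, cohypOf T (ξ + ζ) = cohypOf T ζ ∘ cohypOf T ξ := by
  intro ξ
  induction ξ using Ordinal.induction with
  | _ ξ IH =>
    intro ζ
    rcases eq_or_ne ξ 0 with rfl | hξ
    · rw [zero_add, cohypOf_zero]; rfl
    rcases eq_or_ne ζ 0 with rfl | hζ
    · rw [add_zero, cohypOf_zero]; rfl
    set s := log ω ξ with hs
    set t := log ω ζ with ht
    rcases lt_or_ge s t with hst | hts
    · have habs : ξ + ζ = ζ :=
        add_absorp ((lt_opow_iff_log_lt one_lt_omega0 hξ).2 hst) (opow_log_le_self ω hζ)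
      rw [habs]
      funext x
      simp only [Function.comp_apply]
      rw [cohypOf_ne T hζ]
      simp only [Function.comp_apply, ← ht]
      rw [cohypOf_absorb Habs ξ ((lt_opow_iff_log_lt one_lt_omega0 hξ).2 hst)]
    · have hξs : ω ^ s ≤ ξ := opow_log_le_self ω hξ
      have hadd : ξ + ζ = ω ^ s + ((ξ - ω ^ s) + ζ) := by
        rw [← add_assoc, omega0_opow_add_sub ξ hξ]
      have hlog : log ω (ξ + ζ) = s := by
        apply log_omega0_eq (hξs.trans (le_self_add : ξ ≤ ξ + ζ))
        apply principal_add_omega0_opow (s + 1)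
        · rw [← succ_eq_add_one]; exact lt_opow_succ_log_self one_lt_omega0 ξ
        · calc ζ < ω ^ (t + 1) := by
                rw [← succ_eq_add_one]; exact lt_opow_succ_log_self one_lt_omega0 ζ
            _ ≤ ω ^ (s + 1) := opow_le_opow_right omega0_pos (by simpa using hts)
      have hne : ξ + ζ ≠ 0 := fun h => hξ (nonpos_iff_eq_zero.1 (h ▸ (le_self_add : ξ ≤ ξ + ζ)))
      rw [cohypOf_ne T hne, hlog]
      have hsub : (ξ + ζ) - ω ^ s = (ξ - ω ^ s) + ζ := by
        rw [hadd, Ordinal.add_sub_cancel]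
      rw [hsub, IH _ (sub_opow_log_lt ξ hξ), cohypOf_ne T hξ, ← hs]
      rfl

end Cohyp

/-! ### Iterated derivatives -/

noncomputable def Vh (N : Ordinal.{u} → Ordinal.{u}) (ι : Ordinal.{u}) :
    Ordinal.{u} → Ordinal.{u} :=
  if h : ι = 0 then N else derivFamily (fun κ : Set.Iio ι => Vh N κ.1)
termination_by ι
decreasing_by exact κ.2

theorem Vh_zero (N : Ordinal.{u} → Ordinal.{u}) : Vh N 0 = N := by rw [Vh]; simp

theorem Vh_ne (N : Ordinal.{u} → Ordinal.{u}) {ι : Ordinal.{u}} (h : ι ≠ 0) :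
    Vh N ι = derivFamily (fun κ : Set.Iio ι => Vh N κ.1) := by
  conv_lhs => rw [Vh]
  simp [h]

theorem Vh_isNormal {N : Ordinal.{u} → Ordinal.{u}} (hN : IsNormal N) (ι : Ordinal.{u}) :
    IsNormal (Vh N ι) := by
  rcases eq_or_ne ι 0 with rfl | h
  · rwa [Vh_zero]
  · rw [Vh_ne N h]; exact isNormal_derivFamily _

theorem Vh_fp {N : Ordinal.{u} → Ordinal.{u}} (hN : IsNormal N) {κ ι : Ordinal.{u}}
    (h : κ < ι) (x : Ordinal.{u}) : Vh N κ (Vh N ι x) = Vh N ι x := by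
  have hι : ι ≠ 0 := fun e => (not_lt_zero (e ▸ h))
  rw [Vh_ne N hι]
  exact derivFamily_fp (i := (⟨κ, h⟩ : Set.Iio ι)) (Vh_isNormal hN κ) x

/-! ### Least left inverse of a normal function -/

noncomputable def lad (N : Ordinal.{u} → Ordinal.{u}) (α : Ordinal.{u}) : Ordinal.{u} :=
  sInf {δ | α ≤ N δ}

theorem lad_spec {N : Ordinal.{u} → Ordinal.{u}} (hN : IsNormal N) (α : Ordinal.{u}) :
    α ≤ N (lad N α) := by
  rw [lad]; exact csInf_mem (s := {δ | α ≤ N δ}) ⟨α, hN.strictMono.le_apply⟩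

theorem lad_le {N : Ordinal.{u} → Ordinal.{u}} {α δ : Ordinal.{u}} (h : α ≤ N δ) :
    lad N α ≤ δ := by
  rw [lad]; exact csInf_le' (s := {δ | α ≤ N δ}) h

theorem lad_galois {N : Ordinal.{u} → Ordinal.{u}} (hN : IsNormal N) {α δ : Ordinal.{u}} :
    lad N α ≤ δ ↔ α ≤ N δ :=
  ⟨fun h => (lad_spec hN α).trans (hN.monotone h), lad_le⟩

theorem lad_apply {N : Ordinal.{u} → Ordinal.{u}} (hN : IsNormal N) (β : Ordinal.{u}) :
    lad N (N β) = β :=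
  le_antisymm (lad_le le_rfl) (hN.strictMono.le_iff_le.1 (lad_spec hN (N β)))

theorem lad_mono {N : Ordinal.{u} → Ordinal.{u}} (hN : IsNormal N) {α α' : Ordinal.{u}}
    (h : α ≤ α') : lad N α ≤ lad N α' :=
  lad_le (h.trans (lad_spec hN α'))


/-! ### Extremality of the hyperation and cohyperation at `ω ^ r` -/

theorem F_opow_le {f : Ordinal.{u} → Ordinal.{u}} {F : Ordinal.{v} → Ordinal.{u} → Ordinal.{u}}
    (hF : IsHyperation f F) {r : Ordinal.{v}} (hr : r ≠ 0)
    (σ : Ordinal.{v} → Ordinal.{u}) (hσ : ∀ a b, a < b → σ a < σ b)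
    {N : Ordinal.{u} → Ordinal.{u}} (hN : IsNormal N)
    (hsol : ∀ ξ < ω ^ r, ∀ x, F ξ (N x) = N x) :
    ∀ x, F (ω ^ r) x ≤ N x := by
  obtain ⟨⟨Fn, F0, F1, Fl⟩, Fmin⟩ := hF
  set T : Ordinal.{v} → Ordinal.{u} → Ordinal.{u} :=
    fun a => if a < r then F (ω ^ a) else if a = r then N else Vh N (1 + σ a) with hT
  have hTnorm : ∀ a, IsNormal (T a) := by
    intro a; simp only [hT]
    split
    · exact Fn _
    split
    · exact hN
    · exact Vh_isNormal hN _
  have hfixN : ∀ a, a < r → ∀ y, N y = y → F (ω ^ a) y = y := by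
    intro a ha y hy
    conv_lhs => rw [← hy]
    rw [hsol (ω ^ a) ((opow_lt_opow_iff_right one_lt_omega0).2 ha) y, hy]
  have hVfixN : ∀ b, ∀ x, N (Vh N (1 + σ b) x) = Vh N (1 + σ b) x := by
    intro b x
    have hpos : (0 : Ordinal.{u}) < 1 + σ b :=
      lt_of_lt_of_le zero_lt_one (le_self_add)
    have := Vh_fp hN hpos x
    rwa [Vh_zero] at this
  have Habs : ∀ a b, a < b → ∀ x, T a (T b x) = T b x := by
    intro a b hab x
    simp only [hT]
    rcases lt_or_ge b r with hbr | hrb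
    · rw [if_pos hbr, if_pos (hab.trans hbr)]
      have h1 : F (ω ^ a) (F (ω ^ b) x) = F (ω ^ a + ω ^ b) x :=
        (congrFun (Fl (ω ^ a) (ω ^ b)) x).symm
      rw [h1, add_absorp ((opow_lt_opow_iff_right one_lt_omega0).2 hab) le_rfl]
    rcases eq_or_ne b r with rfl | hbne
    · rw [if_neg (lt_irrefl b), if_pos rfl, if_pos hab]
      exact hsol (ω ^ a) ((opow_lt_opow_iff_right one_lt_omega0).2 hab) x
    · rw [if_neg (not_lt.2 hrb), if_neg hbne]
      rcases lt_or_ge a r with har | hra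
      · rw [if_pos har]
        exact hfixN a har _ (hVfixN b x)
      rcases eq_or_ne a r with rfl | hane
      · rw [if_neg (lt_irrefl a), if_pos rfl]
        exact hVfixN b x
      · rw [if_neg (not_lt.2 hra), if_neg hane]
        have hσab : 1 + σ a < 1 + σ b := add_lt_add_right (hσ a b hab) 1
        exact Vh_fp hN hσab x
  have hWH : WeakHyperation f (hyperOf T) := by
    refine ⟨hyperOf_isNormal T hTnorm, hyperOf_zero T, ?_, hyperOf_add Habs⟩
    funext x
    have h1 : (1 : Ordinal.{v}) = ω ^ (0 : Ordinal.{v}) := (opow_zero ω).symm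
    rw [h1, hyperOf_opow]
    simp only [hT]
    rw [if_pos (pos_iff_ne_zero.2 hr), opow_zero, F1]
  intro x
  have h := Fmin (hyperOf T) hWH (ω ^ r) x
  rw [hyperOf_opow] at h
  calc F (ω ^ r) x ≤ T r x := h
    _ = N x := by simp [hT]

theorem G_opow_ge {g : Ordinal.{u} → Ordinal.{u}} {G : Ordinal.{v} → Ordinal.{u} → Ordinal.{u}}
    (hG : IsCohyperation g G) {r : Ordinal.{v}} (hr : r ≠ 0)
    {K : Ordinal.{u} → Ordinal.{u}} (hK : Initial K)
    (habs : ∀ ξ < ω ^ r, ∀ x, K (G ξ x) = K x) :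
    ∀ x, K x ≤ G (ω ^ r) x := by
  obtain ⟨⟨Gi, G0, G1, Gl⟩, Gmax⟩ := hG
  set T : Ordinal.{v} → Ordinal.{u} → Ordinal.{u} :=
    fun a => if a < r then G (ω ^ a) else if a = r then K else fun _ => 0 with hT
  have hTinit : ∀ a, Initial (T a) := by
    intro a; simp only [hT]
    split
    · exact Gi _
    split
    · exact hK
    · exact initial_zero
  have Habs : ∀ a b, a < b → ∀ x, T b (T a x) = T b x := by
    intro a b hab x
    simp only [hT]
    rcases lt_or_ge b r with hbr | hrb
    · rw [if_pos hbr, if_pos (hab.trans hbr)]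
      have h1 : G (ω ^ b) (G (ω ^ a) x) = G (ω ^ a + ω ^ b) x :=
        (congrFun (Gl (ω ^ a) (ω ^ b)) x).symm
      rw [h1, add_absorp ((opow_lt_opow_iff_right one_lt_omega0).2 hab) le_rfl]
    · rw [if_neg (not_lt.2 hrb)]
      rcases eq_or_ne b r with rfl | hbne
      · rw [if_pos rfl, if_pos hab]
        exact habs (ω ^ a) ((opow_lt_opow_iff_right one_lt_omega0).2 hab) x
      · rw [if_neg hbne]
  have hWC : WeakCohyperation g (cohypOf T) := by
    refine ⟨cohypOf_initial T hTinit, cohypOf_zero T, ?_, cohypOf_add Habs⟩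
    funext x
    have h1 : (1 : Ordinal.{v}) = ω ^ (0 : Ordinal.{v}) := (opow_zero ω).symm
    rw [h1, cohypOf_opow]
    simp only [hT]
    rw [if_pos (pos_iff_ne_zero.2 hr), opow_zero, G1]
  intro x
  have h := Gmax (cohypOf T) hWC (ω ^ r) x
  rw [cohypOf_opow] at h
  calc K x = T r x := by simp [hT]
    _ ≤ G (ω ^ r) x := h

/-! ### The main induction -/

theorem main {f g : Ordinal.{u} → Ordinal.{u}} {F G : Ordinal.{v} → Ordinal.{u} → Ordinal.{u}}
    (hf : Order.IsNormal f) (hF : IsHyperation f F)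
    (hg : LeftAdjoint f g) (hG : IsCohyperation g G) :
    ∀ ξ : Ordinal.{v}, (∀ α, F ξ (G ξ α) ≤ α) ∧ (∀ β, G ξ (F ξ β) = β) := by
  obtain ⟨⟨Fn, F0, F1, Fl⟩, Fmin⟩ := id hF
  obtain ⟨⟨Gi, G0, G1, Gl⟩, Gmax⟩ := id hG
  have Flx : ∀ ξ ζ x, F (ξ + ζ) x = F ξ (F ζ x) := fun ξ ζ x => congrFun (Fl ξ ζ) x
  have Glx : ∀ ξ ζ x, G (ξ + ζ) x = G ζ (G ξ x) := fun ξ ζ x => congrFun (Gl ξ ζ) x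
  have hgf : ∀ β, g (f β) = β := fun β => (hg (f β) β).1 rfl
  have hfg : ∀ γ, f (g γ) ≤ γ := by
    intro γ
    by_contra h
    exact lt_irrefl _ ((hg γ (g γ)).2 (not_le.1 h))
  by_cases hid : ∀ x, f x = x
  · -- the degenerate case `f = id`
    have hFid : ∀ ξ x, F ξ x = x := by
      have hWH : WeakHyperation f (fun _ => fun x => x) := by
        refine ⟨fun _ => isNormal_id, rfl, ?_, fun ξ ζ => rfl⟩
        funext x; exact (hid x).symm
      intro ξ x
      exact le_antisymm (Fmin _ hWH ξ x) (Fn ξ).strictMono.le_apply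
    have hgid : ∀ x, g x = x := by
      intro x
      have h := hgf x
      rwa [hid x] at h
    have hGid : ∀ ξ x, G ξ x = x := by
      have hWC : WeakCohyperation g (fun _ => fun x => x) := by
        refine ⟨fun _ => initial_id, rfl, ?_, fun ξ ζ => rfl⟩
        funext x; exact (hgid x).symm
      intro ξ x
      exact le_antisymm (initial_le (Gi ξ) x) (Gmax _ hWC ξ x)
    intro ξ
    exact ⟨fun α => le_of_eq (by rw [hGid, hFid]), fun β => by rw [hFid, hGid]⟩
  -- the main case : `f` moves some point `x₀`
  push_neg at hid
  obtain ⟨x₀, hx₀⟩ := hid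
  have hx₀lt : x₀ < f x₀ := hf.strictMono.le_apply.lt_of_ne (Ne.symm hx₀)
  have hσ : ∀ a b : Ordinal.{v}, a < b → F a x₀ < F b x₀ := by
    intro a b hab
    have h1 : F a x₀ < F (a + 1) x₀ := by
      rw [Flx, show F 1 x₀ = f x₀ from congrFun F1 x₀]
      exact (Fn a).strictMono hx₀lt
    have hle : a + 1 ≤ b := by
      rw [add_one_eq_succ]; exact succ_le_of_lt hab
    have h2 : F (a + 1) x₀ ≤ F b x₀ := by
      obtain ⟨d, rfl⟩ : ∃ d, b = (a + 1) + d := ⟨b - (a + 1),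
        (Ordinal.add_sub_cancel_of_le hle).symm⟩
      conv_rhs => rw [Flx]
      exact (Fn _).monotone (Fn d).strictMono.le_apply
    exact h1.trans_le h2
  intro ξ
  induction ξ using Ordinal.induction with
  | _ ξ IH =>
  rcases Ordinal.zero_or_succ_or_isSuccLimit ξ with rfl | ⟨δ, rfl⟩ | hlim
  · constructor
    · intro α; rw [F0, G0]; simp
    · intro β; rw [F0, G0]; simp
  · obtain ⟨IH1, IH2⟩ := IH δ (lt_succ δ)
    have hFs : ∀ x, F (succ δ) x = F δ (f x) := by
      intro x
      rw [← add_one_eq_succ, Flx, show F 1 x = f x from congrFun F1 x]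
    have hGs : ∀ x, G (succ δ) x = g (G δ x) := by
      intro x
      rw [← add_one_eq_succ, Glx, show G 1 (G δ x) = g (G δ x) from congrFun G1 _]
    constructor
    · intro α
      rw [hFs, hGs]
      calc F δ (f (g (G δ α))) ≤ F δ (G δ α) := (Fn δ).monotone (hfg _)
        _ ≤ α := IH1 α
    · intro β
      rw [hFs, hGs, IH2 (f β), hgf β]
  · by_cases hp : Principal (· + ·) ξ
    · -- additively indecomposable limit
      obtain ⟨r, hrξ⟩ := (isPrincipal_add_iff_zero_or_omega0_opow.1 hp).resolve_left hlim.pos.ne'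
      have hrξ' : ξ = ω ^ r := hrξ.symm
      clear hrξ
      subst hrξ'
      have hr : r ≠ 0 := by
        rintro rfl
        rw [opow_zero] at hlim
        exact not_isSuccLimit_succ 0 (succ_zero ▸ hlim)
      have hlampos : (0 : Ordinal.{v}) < ω ^ r := opow_pos r omega0_pos
      have Fab : ∀ ξ' < ω ^ r, ∀ x, F ξ' (F (ω ^ r) x) = F (ω ^ r) x := by
        intro ξ' h x
        conv_rhs => rw [← add_absorp h (le_refl (ω ^ r))]
        exact (Flx ξ' _ x).symm
      have Gab : ∀ ξ' < ω ^ r, ∀ x, G (ω ^ r) (G ξ' x) = G (ω ^ r) x := by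
        intro ξ' h x
        rw [← Glx, add_absorp h (le_refl (ω ^ r))]
      -- every common fixed point of the earlier levels is in the range of `F (ω ^ r)`
      have hDrange : ∀ α, (∀ ξ' < ω ^ r, F ξ' α = α) → ∃ c, F (ω ^ r) c = α := by
        intro α hαfix
        have hLn : IsNormal (F (ω ^ r)) := Fn _
        set c₀ := lad (F (ω ^ r)) α with hc₀
        have hαle : α ≤ F (ω ^ r) c₀ := lad_spec hLn α
        have hbelow : ∀ c < c₀, F (ω ^ r) c < α := by
          intro c hc
          by_contra hle
          exact (lad_le (not_lt.1 hle)).not_gt hc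
        rcases eq_or_ne α (F (ω ^ r) c₀) with heq | hne
        · exact ⟨c₀, heq.symm⟩
        exfalso
        have hlt : α < F (ω ^ r) c₀ := hαle.lt_of_ne hne
        have hc₀nl : ¬ IsSuccLimit c₀ := by
          intro hl
          have := (hLn.le_iff_forall_le hl).2 (fun b hb => (hbelow b hb).le)
          exact hne (le_antisymm hαle this)
        -- insert `α` into the range of `F (ω ^ r)` just before position `c₀`
        set L := F (ω ^ r) with hL
        set N' : Ordinal.{u} → Ordinal.{u} :=
          fun c => if c < c₀ then L c else if c = c₀ then α else L (c₀ + (c - (c₀ + 1)))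
          with hN'
        have nA : ∀ c < c₀, N' c = L c := by
          intro c hc; simp only [hN']; rw [if_pos hc]
        have nB : N' c₀ = α := by
          simp [hN']
        have nC : ∀ d, N' (c₀ + 1 + d) = L (c₀ + d) := by
          intro d
          have h1 : ¬ (c₀ + 1 + d < c₀) := by
            push_neg
            calc c₀ ≤ c₀ + 1 := le_self_add
              _ ≤ c₀ + 1 + d := le_self_add
          have h2 : c₀ + 1 + d ≠ c₀ := by
            intro h
            have hle : c₀ + 1 ≤ c₀ := by
              calc c₀ + 1 ≤ c₀ + 1 + d := le_self_add
                _ = c₀ := h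
            rw [add_one_eq_succ] at hle
            exact (lt_irrefl c₀) (lt_of_lt_of_le (lt_succ c₀) hle)
          simp only [hN']
          rw [if_neg h1, if_neg h2, Ordinal.add_sub_cancel]
        have hdecomp : ∀ c, c₀ < c → ∃ d, c = c₀ + 1 + d := by
          intro c hc
          refine ⟨c - (c₀ + 1), (Ordinal.add_sub_cancel_of_le ?_).symm⟩
          rw [add_one_eq_succ]; exact succ_le_of_lt hc
        have hmono : StrictMono N' := by
          intro a b hab
          rcases lt_trichotomy b c₀ with hb | rfl | hb
          · rw [nA a (hab.trans hb), nA b hb]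
            exact hLn.strictMono hab
          · rw [nA a hab, nB]
            exact hbelow a hab
          · obtain ⟨d, rfl⟩ := hdecomp b hb
            rw [nC d]
            rcases lt_trichotomy a c₀ with ha | rfl | ha
            · rw [nA a ha]
              exact (hbelow a ha).trans_le (hlt.le.trans (hLn.monotone (le_self_add)))
            · rw [nB]
              exact hlt.trans_le (hLn.monotone (le_self_add))
            · obtain ⟨e, rfl⟩ := hdecomp a ha
              rw [nC e]
              apply hLn.strictMono
              rw [add_lt_add_iff_left]
              rwa [add_lt_add_iff_left] at hab
        have hN'n : IsNormal N' := by
          rw [isNormal_iff]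
          refine ⟨hmono, ?_⟩
          intro o ho x hbd
          rcases lt_trichotomy o c₀ with hoc | rfl | hoc
          · rw [nA o hoc]
            refine (hLn.le_iff_forall_le ho).2 ?_
            intro b hb
            rw [← nA b (hb.trans hoc)]
            exact hbd b hb
          · exact absurd ho hc₀nl
          · obtain ⟨d, rfl⟩ := hdecomp _ hoc
            have hd : IsSuccLimit d := by
              rcases Ordinal.zero_or_succ_or_isSuccLimit d with rfl | ⟨e, rfl⟩ | hd
              · rw [add_zero, add_one_eq_succ] at ho
                exact absurd ho (not_isSuccLimit_succ _)
              · rw [add_succ] at ho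
                exact absurd ho (not_isSuccLimit_succ _)
              · exact hd
            rw [nC d]
            have hlim2 : IsSuccLimit (c₀ + d) := isSuccLimit_add c₀ hd
            refine (hLn.le_iff_forall_le hlim2).2 ?_
            intro e he
            rcases le_or_gt e c₀ with hec | hec
            · have h1 : L e ≤ L c₀ := hLn.monotone hec
              have h2 : L c₀ = N' (c₀ + 1) := by
                have := nC 0
                rw [add_zero, add_zero] at this
                exact this.symm
              have h3 : c₀ + 1 < c₀ + 1 + d := by
                conv_lhs => rw [← add_zero (c₀ + 1)]
                rw [add_lt_add_iff_left]
                exact hd.pos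
              exact h1.trans (h2 ▸ hbd (c₀ + 1) h3)
            · obtain ⟨e', he'⟩ : ∃ e', e = c₀ + e' :=
                ⟨e - c₀, (Ordinal.add_sub_cancel_of_le hec.le).symm⟩
              have he'd : e' < d := by
                rw [he', add_lt_add_iff_left] at he
                exact he
              have h4 : L e = N' (c₀ + 1 + e') := by rw [nC e', he']
              have h5 : c₀ + 1 + e' < c₀ + 1 + d := by
                rw [add_lt_add_iff_left]; exact he'd
              exact h4 ▸ hbd _ h5
        have hsol' : ∀ ξ' < ω ^ r, ∀ x, F ξ' (N' x) = N' x := by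
          intro ξ' hξ' x
          rcases lt_trichotomy x c₀ with hx | rfl | hx
          · rw [nA x hx]; exact Fab ξ' hξ' x
          · rw [nB]; exact hαfix ξ' hξ'
          · obtain ⟨d, rfl⟩ := hdecomp x hx
            rw [nC d]; exact Fab ξ' hξ' (c₀ + d)
        have hcontra := F_opow_le hF hr (fun ξ => F ξ x₀) hσ hN'n hsol' c₀
        rw [nB] at hcontra
        exact hlt.not_ge hcontra
      -- part (1) at ω ^ r
      have part1 : ∀ α, F (ω ^ r) (G (ω ^ r) α) ≤ α := by
        intro α
        induction α using Ordinal.induction with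
        | _ α IHα =>
          by_cases hfix : ∀ ξ', ξ' < ω ^ r → G ξ' α = α
          · have hFfix : ∀ ξ' < ω ^ r, F ξ' α = α := by
              intro ξ' h
              by_contra hne
              have hlt : α < F ξ' α := (Fn ξ').strictMono.le_apply.lt_of_ne (Ne.symm hne)
              have h1 : F ξ' (G ξ' α) ≤ α := (IH ξ' h).1 α
              have h2 : G ξ' α < α := (Fn ξ').strictMono.lt_iff_lt.1 (h1.trans_lt hlt)
              exact h2.ne (hfix ξ' h)
            obtain ⟨c, hc⟩ := hDrange α hFfix
            have hGc : G (ω ^ r) α ≤ c := by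
              by_contra hgt
              push_neg at hgt
              obtain ⟨γ, hγ⟩ := Gi (ω ^ r) (α + 1)
              have hmem : G (ω ^ r) α ∈ {x | x < γ} := by
                rw [← hγ]; exact ⟨α, lt_add_one α, rfl⟩
              have hcmem : c ∈ {x | x < γ} := hgt.trans hmem
              rw [← hγ] at hcmem
              obtain ⟨α', hα', hgα'⟩ := hcmem
              have hα'le : α' ≤ α := by
                have h : α' < α + 1 := hα'
                rwa [add_one_eq_succ, lt_succ_iff] at h
              rcases hα'le.lt_or_eq with hlt | heq
              · have hle := IHα α' hlt
                rw [hgα', hc] at hle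
                exact absurd hle (not_le.2 hlt)
              · rw [heq] at hgα'
                exact hgt.ne' hgα'
            calc F (ω ^ r) (G (ω ^ r) α) ≤ F (ω ^ r) c := (Fn _).monotone hGc
              _ = α := hc
          · push_neg at hfix
            obtain ⟨ξ', hξ', hne⟩ := hfix
            have hlt : G ξ' α < α := (initial_le (Gi ξ') α).lt_of_ne hne
            have hle := IHα (G ξ' α) hlt
            rw [Gab ξ' hξ' α] at hle
            exact hle.trans hlt.le
      -- the maximal collapsing map K
      set K : Ordinal.{u} → Ordinal.{u} :=
        fun α => sInf {d | ∃ ζ, ζ < ω ^ r ∧ d = lad (F (ω ^ r)) (G ζ α)} with hKdef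
      have hKne : ∀ α, {d | ∃ ζ, ζ < ω ^ r ∧ d = lad (F (ω ^ r)) (G ζ α)}.Nonempty := by
        intro α
        exact ⟨lad (F (ω ^ r)) (G 0 α), 0, hlampos, rfl⟩
      have hKmem : ∀ α, ∃ ζ, ζ < ω ^ r ∧ K α = lad (F (ω ^ r)) (G ζ α) := by
        intro α; rw [hKdef]
        exact csInf_mem (hKne α)
      have hKle : ∀ α ζ, ζ < ω ^ r → K α ≤ lad (F (ω ^ r)) (G ζ α) := by
        intro α ζ h; rw [hKdef]
        exact csInf_le' ⟨ζ, h, rfl⟩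
      have hKapp : ∀ β, K (F (ω ^ r) β) = β := by
        intro β
        obtain ⟨ζ, hζ, hK⟩ := hKmem (F (ω ^ r) β)
        rw [hK]
        have h1 : F ζ (F (ω ^ r) β) = F (ω ^ r) β := Fab ζ hζ β
        have h2 : G ζ (F (ω ^ r) β) = F (ω ^ r) β := by
          conv_lhs => rw [← h1]
          exact (IH ζ hζ).2 (F (ω ^ r) β)
        rw [h2, lad_apply (Fn _)]
      have hKG : ∀ ξ' < ω ^ r, ∀ α, K (G ξ' α) = K α := by
        intro ξ' hξ' α
        apply le_antisymm
        · obtain ⟨ζ₀, hζ₀, hK⟩ := hKmem α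
          have hζeq : ξ' + ((ζ₀ + ξ') - ξ') = ζ₀ + ξ' :=
            Ordinal.add_sub_cancel_of_le (le_add_self)
          have hζlt : (ζ₀ + ξ') - ξ' < ω ^ r :=
            lt_of_le_of_lt (sub_le_self _ _) (hp hζ₀ hξ')
          calc K (G ξ' α) ≤ lad (F (ω ^ r)) (G ((ζ₀ + ξ') - ξ') (G ξ' α)) := hKle _ _ hζlt
            _ = lad (F (ω ^ r)) (G (ξ' + ((ζ₀ + ξ') - ξ')) α) := by rw [Glx]
            _ = lad (F (ω ^ r)) (G (ζ₀ + ξ') α) := by rw [hζeq]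
            _ = lad (F (ω ^ r)) (G ξ' (G ζ₀ α)) := by rw [Glx]
            _ ≤ lad (F (ω ^ r)) (G ζ₀ α) := lad_mono (Fn _) (initial_le (Gi ξ') _)
            _ = K α := hK.symm
        · obtain ⟨ζ₁, hζ₁, hK⟩ := hKmem (G ξ' α)
          have h2 : ξ' + ζ₁ < ω ^ r := hp hξ' hζ₁
          calc K α ≤ lad (F (ω ^ r)) (G (ξ' + ζ₁) α) := hKle _ _ h2
            _ = lad (F (ω ^ r)) (G ζ₁ (G ξ' α)) := by rw [Glx]
            _ = K (G ξ' α) := hK.symm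
      have hKinit : Initial K := by
        intro β₀
        rcases eq_or_ne β₀ 0 with rfl | hβ₀
        · exact ⟨0, by ext x; simp [not_lt_zero]⟩
        · haveI : Small.{u} {α : Ordinal.{u} | α < β₀} := Ordinal.small_Iio β₀
          have hSne : ((fun α => K α + 1) '' {α | α < β₀}).Nonempty :=
            ⟨K 0 + 1, 0, pos_iff_ne_zero.2 hβ₀, rfl⟩
          have hSbdd : BddAbove ((fun α => K α + 1) '' {α | α < β₀}) := bddAbove_of_small
          refine ⟨sSup ((fun α => K α + 1) '' {α | α < β₀}), ?_⟩
          ext x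
          simp only [Set.mem_image, Set.mem_setOf_eq]
          constructor
          · rintro ⟨α, hα, rfl⟩
            exact lt_of_lt_of_le (lt_add_one _) (le_csSup hSbdd ⟨α, hα, rfl⟩)
          · intro hx
            obtain ⟨y, ⟨α, hα, rfl⟩, hxy⟩ := (lt_csSup_iff hSbdd hSne).1 hx
            have hxK : x ≤ K α := by
              have hxy' : x < K α + 1 := hxy
              rwa [add_one_eq_succ, lt_succ_iff] at hxy'
            rcases hxK.lt_or_eq with hlt | heq
            · refine ⟨F (ω ^ r) x, ?_, hKapp x⟩
              have h1 : K α ≤ lad (F (ω ^ r)) α := by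
                have h0 : G 0 α = α := congrFun G0 α
                have h := hKle α 0 hlampos
                rwa [h0] at h
              have h2 : x < lad (F (ω ^ r)) α := hlt.trans_le h1
              have h3 : ¬ α ≤ F (ω ^ r) x := fun hc => (lad_le hc).not_gt h2
              exact (not_le.1 h3).trans hα
            · exact ⟨α, hα, heq.symm⟩
      have hKmax : ∀ x, K x ≤ G (ω ^ r) x := G_opow_ge hG hr hKinit hKG
      have part2 : ∀ β, G (ω ^ r) (F (ω ^ r) β) = β := by
        intro β
        apply le_antisymm
        · exact (Fn _).strictMono.le_iff_le.1 (part1 (F (ω ^ r) β))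
        · calc β = K (F (ω ^ r) β) := (hKapp β).symm
            _ ≤ G (ω ^ r) (F (ω ^ r) β) := hKmax _
      exact ⟨part1, part2⟩
    · -- decomposable limit
      unfold Principal IsPrincipal at hp
      push_neg at hp
      obtain ⟨a, b, ha, hb, hab⟩ := hp
      have hsum : a + (ξ - a) = ξ := Ordinal.add_sub_cancel_of_le ha.le
      have hπb : ξ - a ≤ b := Ordinal.sub_le.2 hab
      have hπξ : ξ - a < ξ := lt_of_le_of_lt hπb hb
      constructor
      · intro α
        rw [← hsum, Flx, Glx]
        calc F a (F (ξ - a) (G (ξ - a) (G a α)))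
            ≤ F a (G a α) := (Fn a).monotone ((IH _ hπξ).1 _)
          _ ≤ α := (IH a ha).1 α
      · intro β
        rw [← hsum, Flx, Glx, (IH a ha).2 (F (ξ - a) β), (IH _ hπξ).2 β]

end CLAH

theorem cohyperation_leftAdjoint_hyperation (f : Ordinal → Ordinal) (hf : Order.IsNormal f)
    (F : Ordinal → Ordinal → Ordinal) (hF : IsHyperation f F)
    (g : Ordinal → Ordinal) (hg : LeftAdjoint f g)
    (G : Ordinal → Ordinal → Ordinal) (hG : IsCohyperation g G) :
    ∀ ξ : Ordinal, LeftAdjoint (F ξ) (G ξ) := by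
  intro ξ α β
  obtain ⟨h1, h2⟩ := CLAH.main hf hF hg hG ξ
  constructor
  · rintro rfl
    exact h2 β
  · intro hlt
    exact ((hF.1.1 ξ).strictMono.lt_iff_lt).1 ((h1 α).trans_lt hlt)
end
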